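/- arXiv:math-ph/0007006 — 3 statements merged into one kernel-verified Lean document; each statement's English description precedes it below -/
import Mathlib

section
/- For every integer m ≥ 0 and every y ∈ ℝ, the integral over x ∈ ℝ of p_m(x,y)·|u(x+iy)|² dx equals 0, where p_m(x,y) := (4/(m+1))·(x^{m+5}/(m+5) − 3y²·x^{m+3}/(m+3) − β·x^{m+2}/(m+2))·(x³ − 3y²x − β) − m(m−1)·x^{m−2} − 4x^m·(3x²y − y³ + α) − (12/(m+1))·y·x^{m+2} (for m ∈ {0,1} the term m(m−1)·x^{m−2} is identically 0). -/
open Complex Real ComplexConjugate MeasureTheory Filter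

section Aux

lemma aux_bound (n : ℕ) {c : ℝ} (hc : 0 < c) :
    ∃ C : ℝ, 0 ≤ C ∧ ∀ x : ℝ, 1 ≤ |x| →
      |x| ^ n * Real.exp (-(|x| ^ c)) ≤ C * |x| ^ (-(2:ℝ)) := by
  set k : ℕ := ⌈((n:ℝ) + 2) / c⌉₊ with hk
  refine ⟨(Nat.factorial k : ℝ), by positivity, fun x hx => ?_⟩
  set t := |x| with ht
  have ht0 : (0:ℝ) < t := lt_of_lt_of_le one_pos hx
  have htc : (0:ℝ) < t ^ c := Real.rpow_pos_of_pos ht0 c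
  have hck : (n:ℝ) + 2 ≤ c * k := by
    have h1 : ((n:ℝ) + 2) / c ≤ k := Nat.le_ceil _
    calc (n:ℝ) + 2 = (((n:ℝ)+2)/c) * c := by field_simp
    _ ≤ k * c := by nlinarith
    _ = c * k := by ring
  have h1 : (t ^ c) ^ k / (Nat.factorial k : ℝ) ≤ Real.exp (t ^ c) := by
    calc (t ^ c) ^ k / (Nat.factorial k : ℝ)
        ≤ ∑ i ∈ Finset.range (k+1), (t ^ c) ^ i / Nat.factorial i :=
          Finset.single_le_sum (f := fun i => (t ^ c) ^ i / (Nat.factorial i : ℝ))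
            (fun i _ => by positivity) (Finset.self_mem_range_succ k)
    _ ≤ Real.exp (t ^ c) := Real.sum_le_exp_of_nonneg htc.le _
  have hexp : Real.exp (-(t ^ c)) ≤ (Nat.factorial k : ℝ) / (t ^ c) ^ k := by
    rw [Real.exp_neg, inv_le_comm₀ (Real.exp_pos _) (by positivity), inv_div]
    exact h1
  have hpow : ((t ^ c) ^ k : ℝ) = t ^ (c * k) := by
    rw [← Real.rpow_natCast (t ^ c) k, ← Real.rpow_mul ht0.le]
  have h2 : t ^ n * Real.exp (-(t ^ c)) ≤ (Nat.factorial k : ℝ) * (t ^ ((n:ℝ) - c * k)) := by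
    calc t ^ n * Real.exp (-(t ^ c)) ≤ t ^ n * ((Nat.factorial k : ℝ) / (t ^ c) ^ k) := by
          exact mul_le_mul_of_nonneg_left hexp (by positivity)
    _ = (Nat.factorial k : ℝ) * (t ^ (n:ℝ) / t ^ (c * k)) := by
          rw [hpow, ← Real.rpow_natCast t n]; ring
    _ = (Nat.factorial k : ℝ) * (t ^ ((n:ℝ) - c * k)) := by rw [← Real.rpow_sub ht0]
  refine h2.trans ?_
  have h3 : t ^ ((n:ℝ) - c*k) ≤ t ^ (-(2:ℝ)) :=
    Real.rpow_le_rpow_of_exponent_le hx (by linarith)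
  exact mul_le_mul_of_nonneg_left h3 (by positivity)

lemma aux_tendsto (n : ℕ) {c : ℝ} (hc : 0 < c) :
    Tendsto (fun x : ℝ => |x| ^ n * Real.exp (-(|x| ^ c))) atTop (nhds 0) := by
  obtain ⟨C, hC0, hC⟩ := aux_bound n hc
  have h1 : Tendsto (fun x : ℝ => C * x ^ (-(2:ℝ))) atTop (nhds 0) := by
    have := (tendsto_rpow_neg_atTop (by norm_num : (0:ℝ) < 2)).const_mul C
    simpa using this
  refine squeeze_zero_norm' ?_ h1
  filter_upwards [eventually_ge_atTop (1:ℝ)] with x hx1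
  have hx : 1 ≤ |x| := by rwa [_root_.abs_of_nonneg (by linarith)]
  have := hC x hx
  rw [Real.norm_eq_abs, _root_.abs_of_nonneg (by positivity)]
  calc |x| ^ n * Real.exp (-(|x| ^ c)) ≤ C * |x| ^ (-(2:ℝ)) := this
  _ = C * x ^ (-(2:ℝ)) := by rw [_root_.abs_of_nonneg (by linarith)]

lemma aux_tendsto_bot (n : ℕ) {c : ℝ} (hc : 0 < c) :
    Tendsto (fun x : ℝ => |x| ^ n * Real.exp (-(|x| ^ c))) atBot (nhds 0) := by
  have h := (aux_tendsto n hc).comp tendsto_neg_atBot_atTop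
  simpa [Function.comp_def, abs_neg] using h

lemma aux_integrable (n : ℕ) {c : ℝ} (hc : 0 < c) :
    Integrable (fun x : ℝ => |x| ^ n * Real.exp (-(|x| ^ c))) := by
  obtain ⟨C, hC0, hC⟩ := aux_bound n hc
  have hcont : Continuous (fun x : ℝ => |x| ^ n * Real.exp (-(|x| ^ c))) := by
    have h1 : Continuous (fun x : ℝ => |x| ^ c) :=
      continuous_abs.rpow_const (fun x => Or.inr hc.le)
    continuity
  have hIoi : IntegrableOn (fun x : ℝ => |x| ^ n * Real.exp (-(|x| ^ c))) (Set.Ioi 1) := by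
    refine Integrable.mono' ((integrableOn_Ioi_rpow_of_lt (by norm_num : (-2:ℝ) < -1)
      one_pos).const_mul C) hcont.aestronglyMeasurable ?_
    filter_upwards [ae_restrict_mem measurableSet_Ioi] with x hx
    have hx1 : (1:ℝ) ≤ |x| := by
      rw [_root_.abs_of_nonneg (by linarith [Set.mem_Ioi.mp hx])]; exact (Set.mem_Ioi.mp hx).le
    rw [Real.norm_eq_abs, _root_.abs_of_nonneg (by positivity)]
    calc |x| ^ n * Real.exp (-(|x| ^ c)) ≤ C * |x| ^ (-(2:ℝ)) := hC x hx1
    _ = C * x ^ (-(2:ℝ)) := by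
        rw [_root_.abs_of_nonneg (by linarith [Set.mem_Ioi.mp hx])]
  have hIic : IntegrableOn (fun x : ℝ => |x| ^ n * Real.exp (-(|x| ^ c))) (Set.Iio (-1)) := by
    rw [← (Measure.measurePreserving_neg (volume : Measure ℝ)).integrableOn_comp_preimage
        (Homeomorph.neg ℝ).measurableEmbedding]
    simp only [Function.comp_def, abs_neg, Set.neg_preimage, Set.neg_Iio, neg_neg]
    exact hIoi
  have hIcc : IntegrableOn (fun x : ℝ => |x| ^ n * Real.exp (-(|x| ^ c))) (Set.Icc (-1) 1) :=
    hcont.continuousOn.integrableOn_compact isCompact_Icc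
  have hcover : (Set.univ : Set ℝ) ⊆ Set.Iio (-1) ∪ (Set.Icc (-1) 1 ∪ Set.Ioi 1) := by
    intro x _
    rcases lt_or_ge x (-1) with h | h
    · exact Or.inl h
    · rcases le_or_gt x 1 with h2 | h2
      · exact Or.inr (Or.inl ⟨h, h2⟩)
      · exact Or.inr (Or.inr h2)
  have := (hIic.union (hIcc.union hIoi)).mono_set hcover
  rwa [integrableOn_univ] at this

lemma key_identity (m : ℕ) (x y al be A B : ℝ) (w vv s : ℂ)
    (hA : A = -(3*x^2*y - y^3 + al)) (hB : B = x^3 - 3*y^2*x - be)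
    (hs : s = ((A : ℂ) + (B : ℂ) * Complex.I) * w) :
    (4/((m:ℝ)+1)) * ((x^(m+4) - 3*y^2*x^(m+2) - be*x^(m+1)) * (star w * vv).im
        + (x^(m+5)/((m:ℝ)+5) - 3*y^2*x^(m+3)/((m:ℝ)+3) - be*x^(m+2)/((m:ℝ)+2)) *
          (star vv * vv + star w * s).im)
    + (2/((m:ℝ)+1)) * ((-(3*y) * (((m:ℝ)+3) * x^(m+2)) + (y^3 - al) * (((m:ℝ)+1) * x^m)) * (star w * w).re
        + (-(3*y) * x^(m+3) + (y^3 - al) * x^(m+1)) * (star vv * w + star w * vv).re)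
    + (((m:ℝ) * x^(m-1)) * (star vv * w + star w * vv).re
        + x^m * (star s * w + star vv * vv + (star vv * vv + star w * s)).re)
    - ((m:ℝ) * (((m-1 : ℕ):ℝ) * x^(m-1-1) * (star w * w).re + x^(m-1) * (star vv * w + star w * vv).re))
    - (2/((m:ℝ)+1)) * ((((m+1 : ℕ):ℝ) * x^(m+1-1)) * (star vv * vv).re
        + x^(m+1) * (star s * vv + star vv * s).re)
    = ((4/((m:ℝ)+1)) * (x^(m+5)/((m:ℝ)+5) - 3*y^2*x^(m+3)/((m:ℝ)+3) - be*x^(m+2)/((m:ℝ)+2)) * (x^3-3*y^2*x-be)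
       - (m:ℝ)*((m:ℝ)-1)*x^(m-2) - 4*x^m*(3*x^2*y - y^3 + al) - (12/((m:ℝ)+1))*y*x^(m+2)) * (star w * w).re := by
  subst hA hB hs
  obtain ⟨a, b⟩ := w
  obtain ⟨c, d⟩ := vv
  simp only [Complex.star_def, Complex.mul_re, Complex.mul_im, Complex.add_re, Complex.add_im,
    Complex.conj_re, Complex.conj_im, Complex.ofReal_re, Complex.ofReal_im,
    Complex.I_re, Complex.I_im]
  have h5 : ((m:ℝ)+5) ≠ 0 := by positivity
  have h3 : ((m:ℝ)+3) ≠ 0 := by positivity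
  have h2 : ((m:ℝ)+2) ≠ 0 := by positivity
  have h1 : ((m:ℝ)+1) ≠ 0 := by positivity
  rcases m with _ | _ | k
  · norm_num
    field_simp
    ring
  · field_simp
    ring
  · simp only [show k+1+1-1 = k+1 from rfl, show k+1+1-1-1 = k from rfl,
      show k+1+1-2 = k from rfl, show k+1+1+1-1 = k+1+1 from rfl]
    push_cast
    field_simp
    ring

lemma hasDerivAt_creal {g : ℝ → ℂ} {g' : ℂ} {x : ℝ} (h : HasDerivAt g g' x) :
    HasDerivAt (fun t => (g t).re) g'.re x := by
  simpa [Function.comp_def] using (Complex.reCLM.hasFDerivAt.comp_hasDerivAt x h)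

lemma hasDerivAt_cimag {g : ℝ → ℂ} {g' : ℂ} {x : ℝ} (h : HasDerivAt g g' x) :
    HasDerivAt (fun t => (g t).im) g'.im x := by
  simpa [Function.comp_def] using (Complex.imCLM.hasFDerivAt.comp_hasDerivAt x h)

lemma term_tendsto {C2 : ℝ} (hC2 : 0 < C2) {C : ℝ} {T : ℝ → ℝ}
    (hT : ∀ x, |T x| ≤ C * Real.exp (-(|x| ^ C2))) (c : ℝ) (k : ℕ)
    {l : Filter ℝ} (hbase : Tendsto (fun x : ℝ => |x| ^ k * Real.exp (-(|x| ^ C2))) l (nhds 0)) :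
    Tendsto (fun x => c * (x ^ k * T x)) l (nhds 0) := by
  have hC : 0 ≤ C := by
    have := (abs_nonneg (T 0)).trans (hT 0)
    nlinarith [Real.exp_pos (-(|(0:ℝ)| ^ C2))]
  have hg : Tendsto (fun x : ℝ => |c| * C * (|x| ^ k * Real.exp (-(|x| ^ C2)))) l (nhds 0) := by
    simpa using hbase.const_mul (|c| * C)
  refine squeeze_zero_norm (fun x => ?_) hg
  have h1 : ‖c * (x ^ k * T x)‖ = |c| * (|x| ^ k * |T x|) := by
    simp [_root_.abs_mul, _root_.abs_pow]
  rw [h1]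
  have h2 : |x| ^ k * |T x| ≤ |x| ^ k * (C * Real.exp (-(|x| ^ C2))) :=
    mul_le_mul_of_nonneg_left (hT x) (by positivity)
  calc |c| * (|x| ^ k * |T x|) ≤ |c| * (|x| ^ k * (C * Real.exp (-(|x| ^ C2)))) :=
        mul_le_mul_of_nonneg_left h2 (abs_nonneg c)
  _ = |c| * C * (|x| ^ k * Real.exp (-(|x| ^ C2))) := by ring

end Aux

set_option maxHeartbeats 2000000

/-- Let `u` be an eigenfunction of the cubic PT-symmetric oscillator
`-u'' - (iz)³u = lam·u` with eigenvalue `lam = α + iβ`. -/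
theorem family_orthogonal_to_abs_u_sq
    (lam : ℂ) (u : ℂ → ℂ)
    (hu_entire : Differentiable ℂ u)
    (hu_ne : u ≠ 0)
    (hode : ∀ w : ℂ, iteratedDeriv 2 u w = (Complex.I * w ^ 3 - lam) * u w)
    (hdecay : ∀ M : ℝ, 0 < M → ∃ C₁ > (0 : ℝ), ∃ C₂ > (0 : ℝ), ∀ x y : ℝ, |y| ≤ M →
      ‖u (x + y * Complex.I)‖ + ‖deriv u (x + y * Complex.I)‖
        ≤ C₁ * Real.exp (-(|x| ^ C₂))) :
    ∀ (m : ℕ) (y : ℝ),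
      ∫ x : ℝ,
        ((4 / ((m : ℝ) + 1)) *
            (x ^ (m + 5) / ((m : ℝ) + 5) - 3 * y ^ 2 * x ^ (m + 3) / ((m : ℝ) + 3)
              - lam.im * x ^ (m + 2) / ((m : ℝ) + 2)) *
            (x ^ 3 - 3 * y ^ 2 * x - lam.im)
          - (m : ℝ) * ((m : ℝ) - 1) * x ^ (m - 2)
          - 4 * x ^ m * (3 * x ^ 2 * y - y ^ 3 + lam.re)
          - (12 / ((m : ℝ) + 1)) * y * x ^ (m + 2))
        * ‖u (x + y * Complex.I)‖ ^ 2 = 0 := by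
  intro m y
  have h1ne : ((m:ℝ)+1) ≠ 0 := by positivity
  have h2ne : ((m:ℝ)+2) ≠ 0 := by positivity
  have h3ne : ((m:ℝ)+3) ≠ 0 := by positivity
  have h5ne : ((m:ℝ)+5) ≠ 0 := by positivity
  set L : ℝ → ℂ := fun x => (x : ℂ) + (y : ℂ) * Complex.I with hLdef
  set f : ℝ → ℂ := fun x => u (L x) with hfdef
  set v : ℝ → ℂ := fun x => deriv u (L x) with hvdef
  have hu2 : Differentiable ℂ (deriv u) :=
    (contDiff_infty_iff_deriv.mp hu_entire.contDiff).2.differentiable (by norm_num)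
  have hLd : ∀ x : ℝ, HasDerivAt L 1 x := by
    intro x
    simpa [hLdef] using (Complex.ofRealCLM.hasDerivAt (x := x)).add_const ((y:ℂ) * Complex.I)
  have hfd : ∀ x : ℝ, HasDerivAt f (v x) x := by
    intro x
    simpa [Function.comp_def] using
      ((hu_entire (L x)).hasDerivAt.hasFDerivAt.restrictScalars ℝ).comp_hasDerivAt x (hLd x)
  have hvd : ∀ x : ℝ, HasDerivAt v
      (((((-(3*x^2*y - y^3 + lam.re) : ℝ) : ℂ)
        + ((x^3 - 3*y^2*x - lam.im : ℝ) : ℂ) * Complex.I)) * f x) x := by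
    intro x
    have h2 : deriv (deriv u) (L x) = (Complex.I * (L x) ^ 3 - lam) * u (L x) := by
      have := hode (L x)
      rwa [iteratedDeriv_succ, iteratedDeriv_one] at this
    have h3 : Complex.I * (L x) ^ 3 - lam
        = ((-(3*x^2*y - y^3 + lam.re) : ℝ) : ℂ)
          + ((x^3 - 3*y^2*x - lam.im : ℝ) : ℂ) * Complex.I := by
      apply Complex.ext <;>
        simp [hLdef, Complex.ext_iff, pow_succ, Complex.mul_re, Complex.mul_im] <;> ring
    have h4 := ((hu2 (L x)).hasDerivAt.hasFDerivAt.restrictScalars ℝ).comp_hasDerivAt x (hLd x)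
    rw [h2, h3] at h4
    simpa [Function.comp_def] using h4
  -- the potential functions
  set Φ : ℝ → ℝ := fun x => (star (f x) * f x).re with hPdef
  set G : ℝ → ℝ := fun x => (star (f x) * v x).im with hGdef
  set Hh : ℝ → ℝ := fun x => (star (v x) * f x + star (f x) * v x).re with hHdef
  set N : ℝ → ℝ := fun x => (star (v x) * v x).re with hNdef
  set p : ℝ → ℝ := fun x =>
    (4 / ((m : ℝ) + 1)) *
        (x ^ (m + 5) / ((m : ℝ) + 5) - 3 * y ^ 2 * x ^ (m + 3) / ((m : ℝ) + 3)
          - lam.im * x ^ (m + 2) / ((m : ℝ) + 2)) *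
        (x ^ 3 - 3 * y ^ 2 * x - lam.im)
      - (m : ℝ) * ((m : ℝ) - 1) * x ^ (m - 2)
      - 4 * x ^ m * (3 * x ^ 2 * y - y ^ 3 + lam.re)
      - (12 / ((m : ℝ) + 1)) * y * x ^ (m + 2) with hpdef
  set F : ℝ → ℝ := fun x =>
    (4/((m:ℝ)+1)) * ((x^(m+5)/((m:ℝ)+5) - 3*y^2*x^(m+3)/((m:ℝ)+3)
        - lam.im*x^(m+2)/((m:ℝ)+2)) * G x)
    + (2/((m:ℝ)+1)) * ((-(3*y) * x^(m+3) + (y^3 - lam.re) * x^(m+1)) * Φ x)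
    + x^m * Hh x
    - (m:ℝ) * (x^(m-1) * Φ x)
    - (2/((m:ℝ)+1)) * (x^(m+1) * N x) with hFdef
  -- derivative of F
  have hQd : ∀ x : ℝ, HasDerivAt
      (fun x : ℝ => x^(m+5)/((m:ℝ)+5) - 3*y^2*x^(m+3)/((m:ℝ)+3) - lam.im*x^(m+2)/((m:ℝ)+2))
      (x^(m+4) - 3*y^2*x^(m+2) - lam.im*x^(m+1)) x := by
    intro x
    have h := (((hasDerivAt_pow (m+5) x).div_const ((m:ℝ)+5)).sub
        (((hasDerivAt_pow (m+3) x).const_mul (3*y^2)).div_const ((m:ℝ)+3))).sub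
      (((hasDerivAt_pow (m+2) x).const_mul lam.im).div_const ((m:ℝ)+2))
    refine h.congr_deriv ?_
    simp only [show m+5-1 = m+4 by omega, show m+3-1 = m+2 by omega, show m+2-1 = m+1 by omega]
    push_cast
    field_simp
  have hRd : ∀ x : ℝ, HasDerivAt
      (fun x : ℝ => -(3*y) * x^(m+3) + (y^3 - lam.re) * x^(m+1))
      (-(3*y) * (((m:ℝ)+3) * x^(m+2)) + (y^3 - lam.re) * (((m:ℝ)+1) * x^m)) x := by
    intro x
    have h := ((hasDerivAt_pow (m+3) x).const_mul (-(3*y))).add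
      ((hasDerivAt_pow (m+1) x).const_mul (y^3 - lam.re))
    refine h.congr_deriv ?_
    simp only [show m+3-1 = m+2 by omega, show m+1-1 = m by omega]
    push_cast
    ring
  have hFd : ∀ x : ℝ, HasDerivAt F (p x * Φ x) x := by
    intro x
    have hG' : HasDerivAt G ((star (v x) * v x + star (f x) *
        ((((-(3*x^2*y - y^3 + lam.re) : ℝ) : ℂ)
          + ((x^3 - 3*y^2*x - lam.im : ℝ) : ℂ) * Complex.I) * f x)).im) x :=
      hasDerivAt_cimag ((hfd x).star.mul (hvd x))
    have hP' : HasDerivAt Φ ((star (v x) * f x + star (f x) * v x).re) x :=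
      hasDerivAt_creal ((hfd x).star.mul (hfd x))
    have hH' : HasDerivAt Hh ((star ((((-(3*x^2*y - y^3 + lam.re) : ℝ) : ℂ)
          + ((x^3 - 3*y^2*x - lam.im : ℝ) : ℂ) * Complex.I) * f x) * f x + star (v x) * v x
        + (star (v x) * v x + star (f x) *
          ((((-(3*x^2*y - y^3 + lam.re) : ℝ) : ℂ)
            + ((x^3 - 3*y^2*x - lam.im : ℝ) : ℂ) * Complex.I) * f x))).re) x :=
      hasDerivAt_creal (((hvd x).star.mul (hfd x)).add ((hfd x).star.mul (hvd x)))
    have hN' : HasDerivAt N ((star ((((-(3*x^2*y - y^3 + lam.re) : ℝ) : ℂ)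
          + ((x^3 - 3*y^2*x - lam.im : ℝ) : ℂ) * Complex.I) * f x) * v x + star (v x) *
          ((((-(3*x^2*y - y^3 + lam.re) : ℝ) : ℂ)
            + ((x^3 - 3*y^2*x - lam.im : ℝ) : ℂ) * Complex.I) * f x)).re) x :=
      hasDerivAt_creal ((hvd x).star.mul (hvd x))
    have hT := ((((HasDerivAt.const_mul (4/((m:ℝ)+1)) ((hQd x).mul hG')).add
        (HasDerivAt.const_mul (2/((m:ℝ)+1)) ((hRd x).mul hP'))).add
        ((hasDerivAt_pow m x).mul hH')).sub
        (HasDerivAt.const_mul (m:ℝ) ((hasDerivAt_pow (m-1) x).mul hP'))).sub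
        (HasDerivAt.const_mul (2/((m:ℝ)+1)) ((hasDerivAt_pow (m+1) x).mul hN'))
    have hkey := key_identity m x y lam.re lam.im
      (-(3*x^2*y - y^3 + lam.re)) (x^3 - 3*y^2*x - lam.im) (f x) (v x)
      ((((-(3*x^2*y - y^3 + lam.re) : ℝ) : ℂ)
        + ((x^3 - 3*y^2*x - lam.im : ℝ) : ℂ) * Complex.I) * f x) rfl rfl rfl
    rw [hFdef, hpdef]
    simp only [hPdef]
    rw [show (fun x => ((4:ℝ)/((m:ℝ)+1)) * ((x^(m+5)/((m:ℝ)+5) - 3*y^2*x^(m+3)/((m:ℝ)+3)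
        - lam.im*x^(m+2)/((m:ℝ)+2)) * G x)
      + (2/((m:ℝ)+1)) * ((-(3*y) * x^(m+3) + (y^3 - lam.re) * x^(m+1)) * Φ x)
      + x^m * Hh x - (m:ℝ) * (x^(m-1) * Φ x) - (2/((m:ℝ)+1)) * (x^(m+1) * N x)) = F from rfl]
    exact hkey ▸ hT
  -- decay bounds
  obtain ⟨C₁, hC₁, C₂, hC₂, hbd⟩ := hdecay (|y| + 1) (by positivity)
  have hb : ∀ x : ℝ, ‖f x‖ + ‖v x‖ ≤ C₁ * Real.exp (-(|x| ^ C₂)) := by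
    intro x
    exact hbd x y (by linarith [abs_nonneg y])
  have hE0 : ∀ x : ℝ, 0 ≤ Real.exp (-(|x| ^ C₂)) := fun x => (Real.exp_pos _).le
  have hE1 : ∀ x : ℝ, Real.exp (-(|x| ^ C₂)) ≤ 1 := by
    intro x
    rw [Real.exp_le_one_iff]
    exact neg_nonpos.mpr (Real.rpow_nonneg (abs_nonneg x) _)
  have hre : ∀ w z : ℂ, |(star w * z).re| ≤ ‖w‖ * ‖z‖ := by
    intro w z
    calc |(star w * z).re| ≤ ‖star w * z‖ := Complex.abs_re_le_norm _
    _ = ‖w‖ * ‖z‖ := by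
        rw [norm_mul]; simp [Complex.star_def]
  have him : ∀ w z : ℂ, |(star w * z).im| ≤ ‖w‖ * ‖z‖ := by
    intro w z
    calc |(star w * z).im| ≤ ‖star w * z‖ := Complex.abs_im_le_norm _
    _ = ‖w‖ * ‖z‖ := by
        rw [norm_mul]; simp [Complex.star_def]
  have key4 : ∀ x : ℝ, |Φ x| ≤ 2*C₁^2 * Real.exp (-(|x|^C₂))
      ∧ |G x| ≤ 2*C₁^2 * Real.exp (-(|x|^C₂))
      ∧ |Hh x| ≤ 2*C₁^2 * Real.exp (-(|x|^C₂))
      ∧ |N x| ≤ 2*C₁^2 * Real.exp (-(|x|^C₂)) := by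
    intro x
    have haf : 0 ≤ ‖f x‖ := norm_nonneg _
    have hav : 0 ≤ ‖v x‖ := norm_nonneg _
    have hq : (‖f x‖ + ‖v x‖) * (‖f x‖ + ‖v x‖)
        ≤ (C₁ * Real.exp (-(|x|^C₂))) * (C₁ * Real.exp (-(|x|^C₂))) :=
      mul_le_mul (hb x) (hb x) (by positivity) (by positivity)
    have hq2 : (C₁ * Real.exp (-(|x|^C₂))) * (C₁ * Real.exp (-(|x|^C₂)))
        ≤ 2*C₁^2 * Real.exp (-(|x|^C₂)) := by
      nlinarith [hE0 x, hE1 x, hC₁, mul_nonneg (mul_nonneg hC₁.le hC₁.le) (hE0 x),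
        mul_nonneg (mul_nonneg (mul_nonneg hC₁.le hC₁.le) (hE0 x)) (sub_nonneg.mpr (hE1 x))]
    have h1 := hre (f x) (f x)
    have h2 := him (f x) (v x)
    have h3a := hre (v x) (f x)
    have h3b := hre (f x) (v x)
    have h3 : |Hh x| ≤ ‖v x‖ * ‖f x‖
        + ‖f x‖ * ‖v x‖ := by
      rw [hHdef]
      calc |(star (v x) * f x + star (f x) * v x).re|
          = |(star (v x) * f x).re + (star (f x) * v x).re| := by simp
      _ ≤ |(star (v x) * f x).re| + |(star (f x) * v x).re| := abs_add_le _ _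
      _ ≤ _ := add_le_add h3a h3b
    have h4 := hre (v x) (v x)
    refine ⟨?_, ?_, ?_, ?_⟩
    · rw [hPdef]
      nlinarith [h1, hq, hq2, mul_nonneg haf hav, mul_self_nonneg (‖v x‖)]
    · rw [hGdef]
      nlinarith [h2, hq, hq2, mul_self_nonneg (‖f x‖),
        mul_self_nonneg (‖v x‖)]
    · nlinarith [h3, hq, hq2, mul_self_nonneg (‖f x‖),
        mul_self_nonneg (‖v x‖)]
    · rw [hNdef]
      nlinarith [h4, hq, hq2, mul_nonneg haf hav, mul_self_nonneg (‖f x‖)]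
  have hΦbd : ∀ x : ℝ, |Φ x| ≤ 2*C₁^2 * Real.exp (-(|x|^C₂)) := fun x => (key4 x).1
  have hGbd : ∀ x : ℝ, |G x| ≤ 2*C₁^2 * Real.exp (-(|x|^C₂)) := fun x => (key4 x).2.1
  have hHbd : ∀ x : ℝ, |Hh x| ≤ 2*C₁^2 * Real.exp (-(|x|^C₂)) := fun x => (key4 x).2.2.1
  have hNbd : ∀ x : ℝ, |N x| ≤ 2*C₁^2 * Real.exp (-(|x|^C₂)) := fun x => (key4 x).2.2.2
  -- continuity
  have hLc : Continuous L := by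
    rw [hLdef]; exact Complex.continuous_ofReal.add continuous_const
  have hfc : Continuous f := by rw [hfdef]; exact hu_entire.continuous.comp hLc
  have hvc : Continuous v := by rw [hvdef]; exact hu2.continuous.comp hLc
  have hΦc : Continuous Φ := by
    rw [hPdef]; exact Complex.continuous_re.comp ((hfc.star.mul hfc))
  have hGc : Continuous G := by
    rw [hGdef]; exact Complex.continuous_im.comp ((hfc.star.mul hvc))
  have hpc : Continuous p := by
    rw [hpdef]; fun_prop
  -- integrability
  have hmono : ∀ n : ℕ, Integrable (fun x : ℝ => x^n * Φ x) := by
    intro n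
    refine Integrable.mono' ((aux_integrable n hC₂).const_mul (2*C₁^2))
      ((continuous_pow n).mul hΦc).aestronglyMeasurable ?_
    filter_upwards with x
    have h := hΦbd x
    have h2 : |x|^n * |Φ x| ≤ |x|^n * (2*C₁^2 * Real.exp (-(|x|^C₂))) :=
      mul_le_mul_of_nonneg_left h (by positivity)
    calc ‖x^n * Φ x‖ = |x|^n * |Φ x| := by
          rw [Real.norm_eq_abs, _root_.abs_mul, _root_.abs_pow]
    _ ≤ |x|^n * (2*C₁^2 * Real.exp (-(|x|^C₂))) := h2
    _ = 2*C₁^2 * (|x|^n * Real.exp (-(|x|^C₂))) := by ring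
  have hint : Integrable (fun x : ℝ => p x * Φ x) := by
    have hexpand : (fun x : ℝ => p x * Φ x) = (fun x : ℝ =>
        (4/(((m:ℝ)+1)*((m:ℝ)+5))) * (x^(m+8) * Φ x)
        + (-(12*y^2)/(((m:ℝ)+1)*((m:ℝ)+5)) + -(12*y^2)/(((m:ℝ)+1)*((m:ℝ)+3))) * (x^(m+6) * Φ x)
        + (-(4*lam.im)/(((m:ℝ)+1)*((m:ℝ)+5)) + -(4*lam.im)/(((m:ℝ)+1)*((m:ℝ)+2))) * (x^(m+5) * Φ x)
        + (36*y^4/(((m:ℝ)+1)*((m:ℝ)+3))) * (x^(m+4) * Φ x)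
        + (12*y^2*lam.im/(((m:ℝ)+1)*((m:ℝ)+3)) + 12*lam.im*y^2/(((m:ℝ)+1)*((m:ℝ)+2))) * (x^(m+3) * Φ x)
        + (4*lam.im^2/(((m:ℝ)+1)*((m:ℝ)+2)) - 12*y - 12/((m:ℝ)+1)*y) * (x^(m+2) * Φ x)
        + (4*(y^3 - lam.re)) * (x^m * Φ x)
        + (-((m:ℝ)*((m:ℝ)-1))) * (x^(m-2) * Φ x)) := by
      funext x
      rw [hpdef]
      field_simp
      ring
    rw [hexpand]
    exact ((((((((hmono (m+8)).const_mul _).add ((hmono (m+6)).const_mul _)).add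
      ((hmono (m+5)).const_mul _)).add ((hmono (m+4)).const_mul _)).add
      ((hmono (m+3)).const_mul _)).add ((hmono (m+2)).const_mul _)).add
      ((hmono m).const_mul _)).add ((hmono (m-2)).const_mul _)
  -- limits of F
  have hFlim : ∀ (l : Filter ℝ),
      (∀ k : ℕ, Tendsto (fun x : ℝ => |x|^k * Real.exp (-(|x|^C₂))) l (nhds 0)) →
      Tendsto F l (nhds 0) := by
    intro l hbase
    have hFexp : F = (fun x : ℝ =>
        (4/(((m:ℝ)+1)*((m:ℝ)+5))) * (x^(m+5) * G x)
        + (-(12*y^2)/(((m:ℝ)+1)*((m:ℝ)+3))) * (x^(m+3) * G x)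
        + (-(4*lam.im)/(((m:ℝ)+1)*((m:ℝ)+2))) * (x^(m+2) * G x)
        + (-(6*y)/((m:ℝ)+1)) * (x^(m+3) * Φ x)
        + (2*(y^3 - lam.re)/((m:ℝ)+1)) * (x^(m+1) * Φ x)
        + (1:ℝ) * (x^m * Hh x)
        + (-(m:ℝ)) * (x^(m-1) * Φ x)
        + (-(2/((m:ℝ)+1))) * (x^(m+1) * N x)) := by
      funext x
      rw [hFdef]
      field_simp
      ring
    rw [hFexp]
    have t1 := term_tendsto hC₂ hGbd (4/(((m:ℝ)+1)*((m:ℝ)+5))) (m+5) (hbase (m+5))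
    have t2 := term_tendsto hC₂ hGbd (-(12*y^2)/(((m:ℝ)+1)*((m:ℝ)+3))) (m+3) (hbase (m+3))
    have t3 := term_tendsto hC₂ hGbd (-(4*lam.im)/(((m:ℝ)+1)*((m:ℝ)+2))) (m+2) (hbase (m+2))
    have t4 := term_tendsto hC₂ hΦbd (-(6*y)/((m:ℝ)+1)) (m+3) (hbase (m+3))
    have t5 := term_tendsto hC₂ hΦbd (2*(y^3 - lam.re)/((m:ℝ)+1)) (m+1) (hbase (m+1))
    have t6 := term_tendsto hC₂ hHbd (1:ℝ) m (hbase m)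
    have t7 := term_tendsto hC₂ hΦbd (-(m:ℝ)) (m-1) (hbase (m-1))
    have t8 := term_tendsto hC₂ hNbd (-(2/((m:ℝ)+1))) (m+1) (hbase (m+1))
    have := ((((((t1.add t2).add t3).add t4).add t5).add t6).add t7).add t8
    simpa using this
  have hFtop : Tendsto F atTop (nhds 0) := hFlim atTop (fun k => aux_tendsto k hC₂)
  have hFbot : Tendsto F atBot (nhds 0) := hFlim atBot (fun k => aux_tendsto_bot k hC₂)
  -- conclusion
  have hcont : Continuous (fun x : ℝ => p x * Φ x) := hpc.mul hΦc
  have heval : ∀ T : ℝ, (∫ x in (-T)..T, p x * Φ x) = F T - F (-T) := fun T =>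
    intervalIntegral.integral_eq_sub_of_hasDerivAt (fun t _ => hFd t)
      (hcont.intervalIntegrable _ _)
  have hIt : Tendsto (fun T : ℝ => ∫ x in (-T)..T, p x * Φ x) atTop
      (nhds (∫ x : ℝ, p x * Φ x)) :=
    intervalIntegral_tendsto_integral hint tendsto_neg_atTop_atBot tendsto_id
  have hsub : Tendsto (fun T : ℝ => F T - F (-T)) atTop (nhds 0) := by
    have := hFtop.sub (hFbot.comp tendsto_neg_atTop_atBot)
    simpa [Function.comp_def] using this
  have hzero : (∫ x : ℝ, p x * Φ x) = 0 := by
    refine tendsto_nhds_unique ?_ hsub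
    simpa only [heval] using hIt
  have habs : ∀ x : ℝ, (‖u ((x:ℂ) + (y:ℂ) * Complex.I)‖)^2 = Φ x := by
    intro x
    rw [hPdef]
    simp only [hfdef, hLdef]
    rw [Complex.sq_norm, Complex.normSq_apply]
    simp [Complex.star_def, Complex.mul_re]
  simp only [habs]
  exact hzero
end

section
/- Let p(x,y) be a polynomial in two real variables such that for every y ∈ ℝ the integral over x ∈ ℝ of p(x,y)·|u(x+iy)|² dx equals 0. Then the polynomial q(x,y) := ∂p/∂y(x,y) + 2·(x³ − 3xy² − β)·∫₀ˣ p(t,y) dt also satisfies: for every y ∈ ℝ, the integral over x ∈ ℝ of q(x,y)·|u(x+iy)|² dx equals 0. -/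
open Complex Real ComplexConjugate MeasureTheory
open Filter Topology

/-- Derivative of a 2-variable polynomial in the second variable. -/
lemma mv_hasDerivAt (P : MvPolynomial (Fin 2) ℝ) (x y : ℝ) :
    HasDerivAt (fun s => MvPolynomial.eval ![x, s] P)
      (MvPolynomial.eval ![x, y] (MvPolynomial.pderiv 1 P)) y := by
  induction P using MvPolynomial.induction_on with
  | C a => simpa using hasDerivAt_const y a
  | add p q hp hq => simpa [Pi.add_def] using hp.add hq
  | mul_X p n hp =>
    have hX : ∀ s : ℝ, MvPolynomial.eval ![x, s] (MvPolynomial.X n) = ![x, s] n := by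
      simp
    fin_cases n <;> simp only [Fin.mk_zero, Fin.mk_one, Fin.isValue]
    · have : (fun s => MvPolynomial.eval ![x, s] (p * MvPolynomial.X 0))
          = fun s => MvPolynomial.eval ![x, s] p * x := by
        funext s; simp [Matrix.cons_val_zero]
      rw [this]
      have := hp.mul_const x
      refine this.congr_deriv ?_
      simp [MvPolynomial.pderiv_X, mul_comm]
    · have : (fun s => MvPolynomial.eval ![x, s] (p * MvPolynomial.X 1))
          = fun s => MvPolynomial.eval ![x, s] p * s := by
        funext s; simp
      rw [this]
      have := hp.mul (hasDerivAt_id y)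
      refine this.congr_deriv ?_
      simp [MvPolynomial.pderiv_X]
      ring

/-- Growth bound for a 2-variable polynomial, uniform over a bounded range of the
second variable. -/
lemma mv_bound (P : MvPolynomial (Fin 2) ℝ) (R : ℝ) :
    ∃ C : ℝ, 0 ≤ C ∧ ∃ n : ℕ, ∀ x y : ℝ, |y| ≤ R →
      |MvPolynomial.eval ![x, y] P| ≤ C * (1 + |x|) ^ n := by
  induction P using MvPolynomial.induction_on with
  | C a =>
    exact ⟨|a|, abs_nonneg a, 0, fun x y _ => by simp⟩
  | add p q hp hq =>
    obtain ⟨C₁, hC₁, n₁, h₁⟩ := hp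
    obtain ⟨C₂, hC₂, n₂, h₂⟩ := hq
    refine ⟨C₁ + C₂, add_nonneg hC₁ hC₂, max n₁ n₂, fun x y hy => ?_⟩
    have hb : (1:ℝ) ≤ 1 + |x| := le_add_of_nonneg_right (abs_nonneg x)
    calc |MvPolynomial.eval ![x, y] (p + q)|
        ≤ |MvPolynomial.eval ![x, y] p| + |MvPolynomial.eval ![x, y] q| := by
          simp only [map_add]; exact abs_add_le _ _
      _ ≤ C₁ * (1 + |x|) ^ n₁ + C₂ * (1 + |x|) ^ n₂ := add_le_add (h₁ x y hy) (h₂ x y hy)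
      _ ≤ C₁ * (1 + |x|) ^ (max n₁ n₂) + C₂ * (1 + |x|) ^ (max n₁ n₂) := by
          gcongr <;> [exact le_max_left _ _; exact le_max_right _ _]
      _ = (C₁ + C₂) * (1 + |x|) ^ (max n₁ n₂) := by ring
  | mul_X p n hp =>
    obtain ⟨C, hC, m, h⟩ := hp
    refine ⟨C * max 1 R, mul_nonneg hC (le_trans zero_le_one (le_max_left _ _)), m + 1, fun x y hy => ?_⟩
    have hb : (0:ℝ) ≤ 1 + |x| := by positivity
    have hXb : |(![x, y] n : ℝ)| ≤ max 1 R * (1 + |x|) := by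
      fin_cases n <;>
        simp only [Fin.mk_zero, Fin.mk_one, Fin.isValue, Matrix.cons_val_zero,
          Matrix.cons_val_one, Matrix.head_cons]
      · nlinarith [abs_nonneg x, le_max_left (1:ℝ) R, abs_nonneg y]
      · nlinarith [le_max_right (1:ℝ) R, abs_nonneg x, le_max_left (1:ℝ) R]
    calc |MvPolynomial.eval ![x, y] (p * MvPolynomial.X n)|
        = |MvPolynomial.eval ![x, y] p| * |(![x, y] n : ℝ)| := by
          simp [abs_mul]
      _ ≤ (C * (1 + |x|) ^ m) * (max 1 R * (1 + |x|)) := by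
          exact mul_le_mul (h x y hy) hXb (abs_nonneg _) (by positivity)
      _ = C * max 1 R * (1 + |x|) ^ (m + 1) := by ring

lemma tendsto_poly_exp_aux (n : ℕ) (b c : ℝ) (hb : 0 < b) (hc : 0 < c) :
    Tendsto (fun r : ℝ => (1 + r) ^ n * Real.exp (-(b * r ^ c))) atTop (𝓝 0) := by
  have key : Tendsto (fun r : ℝ => 2 ^ n * ((r ^ c) ^ ((n : ℝ) / c) * Real.exp (-b * r ^ c)))
      atTop (𝓝 0) := by
    have h1 : Tendsto (fun s : ℝ => s ^ ((n : ℝ) / c) * Real.exp (-b * s)) atTop (𝓝 0) :=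
      tendsto_rpow_mul_exp_neg_mul_atTop_nhds_zero _ b hb
    have h2 : Tendsto (fun r : ℝ => r ^ c) atTop atTop := tendsto_rpow_atTop hc
    have := h1.comp h2
    simpa using (this.const_mul (2 ^ n : ℝ))
  rw [show (0:ℝ) = 2 ^ n * 0 by ring] at key
  refine squeeze_zero' ?_ ?_ (by simpa using key)
  · filter_upwards [eventually_ge_atTop (0:ℝ)] with r hr
    positivity
  · filter_upwards [eventually_ge_atTop (1:ℝ)] with r hr
    have hr0 : (0:ℝ) ≤ r := by linarith
    have hrc : (r ^ c) ^ ((n : ℝ) / c) = r ^ (n : ℕ) := by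
      rw [← Real.rpow_natCast r n, ← Real.rpow_mul hr0]
      congr 1
      field_simp
    rw [hrc]
    have h1r : (1 + r) ^ n ≤ (2 * r) ^ n := by
      gcongr
      linarith
    calc (1 + r) ^ n * Real.exp (-(b * r ^ c)) ≤ (2 * r) ^ n * Real.exp (-(b * r ^ c)) := by
          gcongr
      _ = 2 ^ n * (r ^ n * Real.exp (-(b * r ^ c))) := by rw [mul_pow]; ring

lemma tendsto_poly_exp_abs (n : ℕ) (b c : ℝ) (hb : 0 < b) (hc : 0 < c) :
    Tendsto (fun x : ℝ => (1 + |x|) ^ n * Real.exp (-(b * |x| ^ c))) atTop (𝓝 0) ∧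
    Tendsto (fun x : ℝ => (1 + |x|) ^ n * Real.exp (-(b * |x| ^ c))) atBot (𝓝 0) := by
  have h := tendsto_poly_exp_aux n b c hb hc
  exact ⟨h.comp tendsto_abs_atTop_atTop, h.comp tendsto_abs_atBot_atTop⟩

/-- A continuous function tending to 0 at both infinities is bounded above. -/
lemma bounded_of_tendsto {f : ℝ → ℝ} (hf : Continuous f)
    (ht : Tendsto f atTop (𝓝 0)) (hb : Tendsto f atBot (𝓝 0)) :
    ∃ K : ℝ, 0 < K ∧ ∀ x, f x ≤ K := by
  obtain ⟨A, hA⟩ := (ht.eventually (eventually_le_nhds (by norm_num : (0:ℝ) < 1))).exists_forall_of_atTop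
  obtain ⟨B, hB⟩ := (hb.eventually (eventually_le_nhds (by norm_num : (0:ℝ) < 1))).exists_forall_of_atBot
  obtain ⟨C, hC⟩ := (isCompact_Icc (a := min A B) (b := max A B)).exists_bound_of_continuousOn
    hf.continuousOn
  refine ⟨max 1 C + 1, by positivity, fun x => ?_⟩
  rcases le_or_gt A x with h | h
  · have := hA x h
    nlinarith [le_max_left (1:ℝ) C]
  rcases le_or_gt x B with h' | h'
  · have := hB x h'
    nlinarith [le_max_left (1:ℝ) C]
  · have hx : x ∈ Set.Icc (min A B) (max A B) :=
      ⟨le_trans (min_le_right _ _) h'.le, le_trans h.le (le_max_left _ _)⟩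
    have h1 := hC x hx
    rw [_root_.Real.norm_eq_abs] at h1
    have : f x ≤ C := le_trans (le_abs_self _) h1
    nlinarith [le_max_right (1:ℝ) C]

lemma continuous_poly_exp (n : ℕ) (b c : ℝ) (hc : 0 < c) :
    Continuous (fun x : ℝ => (1 + |x|) ^ n * Real.exp (-(b * |x| ^ c))) := by
  have h1 : Continuous (fun x : ℝ => |x| ^ c) :=
    continuous_abs.rpow_const (fun x => Or.inr hc.le)
  fun_prop

lemma integrable_poly_exp (n : ℕ) (b c : ℝ) (hb : 0 < b) (hc : 0 < c) :
    Integrable (fun x : ℝ => (1 + |x|) ^ n * Real.exp (-(b * |x| ^ c))) := by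
  obtain ⟨ht, hbo⟩ := tendsto_poly_exp_abs (n + 2) b c hb hc
  obtain ⟨K, hK, hKb⟩ := bounded_of_tendsto (continuous_poly_exp (n+2) b c hc) ht hbo
  refine Integrable.mono' (g := fun x => K * (1 + x ^ 2)⁻¹)
    (integrable_inv_one_add_sq.const_mul K)
    (continuous_poly_exp n b c hc).aestronglyMeasurable ?_
  refine Filter.Eventually.of_forall (fun x => ?_)
  have h2 : (0:ℝ) < 1 + x ^ 2 := by positivity
  show ‖(1 + |x|) ^ n * Real.exp (-(b * |x| ^ c))‖ ≤ K * (1 + x ^ 2)⁻¹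
  have hnorm : ‖(1 + |x|) ^ n * Real.exp (-(b * |x| ^ c))‖
      = (1 + |x|) ^ n * Real.exp (-(b * |x| ^ c)) := by
    rw [_root_.Real.norm_eq_abs, _root_.abs_of_nonneg (by positivity)]
  rw [hnorm]
  rw [show K * (1 + x ^ 2)⁻¹ = K / (1 + x ^ 2) from (div_eq_mul_inv K _).symm, le_div_iff₀ h2]
  calc (1 + |x|) ^ n * Real.exp (-(b * |x| ^ c)) * (1 + x ^ 2)
        ≤ (1 + |x|) ^ n * Real.exp (-(b * |x| ^ c)) * (1 + |x|) ^ 2 := by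
          gcongr
          have : x ^ 2 = |x| ^ 2 := (_root_.sq_abs x).symm
          nlinarith [abs_nonneg x]
      _ = (1 + |x|) ^ (n + 2) * Real.exp (-(b * |x| ^ c)) := by ring
      _ ≤ K := hKb x

lemma horiz_hasDerivAt {f : ℂ → ℂ} (hf : Differentiable ℂ f) (x y : ℝ) :
    HasDerivAt (fun t : ℝ => f (t + y * Complex.I)) (deriv f (x + y * Complex.I)) x := by
  have h1 : HasDerivAt (fun w : ℂ => f (w + y * Complex.I))
      (deriv f (x + y * Complex.I)) (x : ℂ) := by
    have h0 : HasDerivAt (fun w : ℂ => w + (y : ℂ) * Complex.I) 1 (x : ℂ) :=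
      (hasDerivAt_id _).add_const _
    simpa [Function.comp_def] using ((hf _).hasDerivAt.comp (x : ℂ) h0)
  exact h1.comp_ofReal

lemma vert_hasDerivAt {f : ℂ → ℂ} (hf : Differentiable ℂ f) (x y : ℝ) :
    HasDerivAt (fun s : ℝ => f (x + s * Complex.I))
      (Complex.I * deriv f (x + y * Complex.I)) y := by
  have h1 : HasDerivAt (fun w : ℂ => f ((x : ℂ) + w * Complex.I))
      (Complex.I * deriv f (x + y * Complex.I)) (y : ℂ) := by
    have h0 : HasDerivAt (fun w : ℂ => (x : ℂ) + w * Complex.I) Complex.I (y : ℂ) := by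
      simpa using ((hasDerivAt_id (y:ℂ)).mul_const Complex.I).const_add (x:ℂ)
    simpa [mul_comm, Function.comp_def] using ((hf _).hasDerivAt.comp (y : ℂ) h0)
  exact h1.comp_ofReal

/-- Real derivative of `normSq ∘ g` for a complex-valued function on `ℝ`. -/
lemma hasDerivAt_normSq_comp {g : ℝ → ℂ} {g' : ℂ} {t : ℝ} (h : HasDerivAt g g' t) :
    HasDerivAt (fun s => Complex.normSq (g s)) (2 * ((conj (g t)) * g').re) t := by
  have hre : HasDerivAt (fun s => (g s).re) g'.re t :=
    Complex.reCLM.hasFDerivAt.comp_hasDerivAt t h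
  have him : HasDerivAt (fun s => (g s).im) g'.im t :=
    Complex.imCLM.hasFDerivAt.comp_hasDerivAt t h
  have := (hre.mul hre).add (him.mul him)
  have heq : (fun s => (g s).re * (g s).re + (g s).im * (g s).im)
      = fun s => Complex.normSq (g s) := by
    funext s; rw [Complex.normSq_apply]
  rw [show (((fun s => (g s).re) * fun s => (g s).re) + (fun s => (g s).im) * fun s => (g s).im) = fun s => Complex.normSq (g s) from heq] at this
  refine this.congr_deriv ?_
  simp [Complex.mul_re, Complex.conj_re, Complex.conj_im]
  ring

/-- Let `u` be an eigenfunction of the cubic PT-symmetric oscillator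
`-u'' - (iz)³u = lam·u` with eigenvalue `lam = α + iβ`.  If `p(x,y)` is a polynomial
in two real variables with `∫_ℝ p(x,y)·|u(x+iy)|² dx = 0` for every `y`, then the
polynomial `q(x,y) = ∂p/∂y(x,y) + 2(x³ - 3xy² - β)·∫₀ˣ p(t,y) dt` also satisfies
`∫_ℝ q(x,y)·|u(x+iy)|² dx = 0` for every `y`. -/
theorem orthogonality_closed_under_y_derivative_operation
    (lam : ℂ) (u : ℂ → ℂ)
    (hu_entire : Differentiable ℂ u)
    (hu_ne : u ≠ 0)
    (hode : ∀ w : ℂ, iteratedDeriv 2 u w = (Complex.I * w ^ 3 - lam) * u w)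
    (hdecay : ∀ M : ℝ, 0 < M → ∃ C₁ > (0 : ℝ), ∃ C₂ > (0 : ℝ), ∀ x y : ℝ, |y| ≤ M →
      ‖u (x + y * Complex.I)‖ + ‖deriv u (x + y * Complex.I)‖
        ≤ C₁ * Real.exp (-(|x| ^ C₂)))
    (p : ℝ → ℝ → ℝ)
    (hp : ∃ P : MvPolynomial (Fin 2) ℝ, ∀ x y : ℝ,
      p x y = MvPolynomial.eval ![x, y] P)
    (horth : ∀ y : ℝ,
      ∫ x : ℝ, p x y * ‖u (x + y * Complex.I)‖ ^ 2 = 0) :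
    ∀ y : ℝ,
      ∫ x : ℝ,
        (deriv (fun s : ℝ => p x s) y
          + 2 * (x ^ 3 - 3 * x * y ^ 2 - lam.im) * ∫ t in (0 : ℝ)..x, p t y)
        * ‖u (x + y * Complex.I)‖ ^ 2 = 0 := by
  intro y₀
  obtain ⟨P, hP⟩ := hp
  set R : ℝ := |y₀| + 1 with hR
  have hR0 : 0 < R := by positivity
  obtain ⟨C₁, hC₁, C₂, hC₂, hdec⟩ := hdecay R hR0
  obtain ⟨Cp, hCp, n, hpb⟩ := mv_bound P R
  obtain ⟨Cd, hCd, m, hdb⟩ := mv_bound (MvPolynomial.pderiv 1 P) R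
  -- basic regularity of u
  have hu2 : ContDiff ℂ 2 u := hu_entire.contDiff
  have hu' : Differentiable ℂ (deriv u) := by
    have := (contDiff_succ_iff_deriv (n := 1)).mp (by exact_mod_cast hu2)
    exact this.2.2.differentiable one_ne_zero
  have hu_cont : Continuous u := hu_entire.continuous
  have hu'_cont : Continuous (deriv u) := hu'.continuous
  have hu'' : ∀ w : ℂ, deriv (deriv u) w = (Complex.I * w ^ 3 - lam) * u w := by
    intro w
    have h := hode w
    rwa [show (2 : ℕ) = 1 + 1 from rfl, iteratedDeriv_succ, iteratedDeriv_one] at h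
  -- notation
  set N : ℝ → ℝ → ℝ := fun x s => Complex.normSq (u (x + s * Complex.I)) with hN
  set G : ℝ → ℝ → ℝ := fun x s =>
    2 * ((conj (u (x + s * Complex.I)) * (Complex.I * deriv u (x + s * Complex.I))).re) with hG
  have hNnonneg : ∀ x s, 0 ≤ N x s := fun x s => Complex.normSq_nonneg _
  -- decay bounds
  have habs_u : ∀ x s : ℝ, |s| ≤ R →
      ‖u (x + s * Complex.I)‖ ≤ C₁ * Real.exp (-(|x| ^ C₂)) := by
    intro x s hs
    have := hdec x s hs
    have h2 := norm_nonneg (deriv u (x + s * Complex.I))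
    linarith [norm_nonneg (u (x + s * Complex.I))]
  have habs_u' : ∀ x s : ℝ, |s| ≤ R →
      ‖deriv u (x + s * Complex.I)‖ ≤ C₁ * Real.exp (-(|x| ^ C₂)) := by
    intro x s hs
    have := hdec x s hs
    linarith [norm_nonneg (u (x + s * Complex.I))]
  have hexp2 : ∀ x : ℝ, Real.exp (-(|x| ^ C₂)) * Real.exp (-(|x| ^ C₂))
      = Real.exp (-(2 * |x| ^ C₂)) := by
    intro x; rw [← Real.exp_add]; ring_nf
  have hNb : ∀ x s : ℝ, |s| ≤ R → N x s ≤ C₁ ^ 2 * Real.exp (-(2 * |x| ^ C₂)) := by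
    intro x s hs
    have h1 := habs_u x s hs
    have h0 := norm_nonneg (u (x + s * Complex.I))
    have : N x s = ‖u (x + s * Complex.I)‖ ^ 2 := (Complex.sq_norm _).symm
    rw [this, ← hexp2 x]
    calc ‖u (x + s * Complex.I)‖ ^ 2
        ≤ (C₁ * Real.exp (-(|x| ^ C₂))) ^ 2 := by
          apply pow_le_pow_left₀ h0 h1
      _ = C₁ ^ 2 * (Real.exp (-(|x| ^ C₂)) * Real.exp (-(|x| ^ C₂))) := by ring
  have hGb : ∀ x s : ℝ, |s| ≤ R → |G x s| ≤ 2 * C₁ ^ 2 * Real.exp (-(2 * |x| ^ C₂)) := by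
    intro x s hs
    have h1 := habs_u x s hs
    have h2 := habs_u' x s hs
    have h0 := norm_nonneg (u (x + s * Complex.I))
    have h0' := norm_nonneg (deriv u (x + s * Complex.I))
    have habs : |G x s| ≤ 2 * (‖u (x + s * Complex.I)‖
        * ‖deriv u (x + s * Complex.I)‖) := by
      rw [hG]
      rw [abs_mul, _root_.abs_two]
      gcongr
      calc |(conj (u (x + s * Complex.I)) * (Complex.I * deriv u (x + s * Complex.I))).re|
          ≤ ‖conj (u (x + s * Complex.I)) * (Complex.I * deriv u (x + s * Complex.I))‖ :=
            Complex.abs_re_le_norm _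
        _ = ‖u (x + s * Complex.I)‖ * ‖deriv u (x + s * Complex.I)‖ := by
            simp [map_mul]
    refine habs.trans ?_
    rw [← hexp2 x]
    calc 2 * (‖u (x + s * Complex.I)‖ * ‖deriv u (x + s * Complex.I)‖)
        ≤ 2 * ((C₁ * Real.exp (-(|x| ^ C₂))) * (C₁ * Real.exp (-(|x| ^ C₂)))) := by
          gcongr
      _ = 2 * C₁ ^ 2 * (Real.exp (-(|x| ^ C₂)) * Real.exp (-(|x| ^ C₂))) := by ring
  -- continuity facts
  have hline : ∀ s : ℝ, Continuous fun x : ℝ => (x : ℂ) + s * Complex.I := by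
    intro s; exact Complex.continuous_ofReal.add continuous_const
  have contP : ∀ (Q : MvPolynomial (Fin 2) ℝ) (s : ℝ),
      Continuous fun x : ℝ => MvPolynomial.eval ![x, s] Q := by
    intro Q s
    have h1 : Continuous fun x : ℝ => (![x, s] : Fin 2 → ℝ) := by
      apply continuous_pi
      intro i
      fin_cases i
      · exact continuous_id
      · exact continuous_const
    exact Q.continuous_eval.comp h1
  have contN : ∀ s : ℝ, Continuous fun x => N x s := by
    intro s
    exact Complex.continuous_normSq.comp (hu_cont.comp (hline s))
  have contG : ∀ s : ℝ, Continuous fun x => G x s := by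
    intro s
    apply Continuous.mul continuous_const
    apply Complex.continuous_re.comp
    exact ((continuous_star.comp (hu_cont.comp (hline s))).mul
      (continuous_const.mul (hu'_cont.comp (hline s))))
  -- pointwise derivative in s
  have hNd : ∀ x s : ℝ, HasDerivAt (fun s' => N x s') (G x s) s := by
    intro x s
    exact hasDerivAt_normSq_comp (vert_hasDerivAt hu_entire x s)
  have hFd : ∀ x s : ℝ, HasDerivAt (fun s' => MvPolynomial.eval ![x, s'] P * N x s')
      (MvPolynomial.eval ![x, s] (MvPolynomial.pderiv 1 P) * N x s
        + MvPolynomial.eval ![x, s] P * G x s) s := by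
    intro x s
    exact (mv_hasDerivAt P x s).mul (hNd x s)
  -- integrable majorants
  have hmono : ∀ (k l : ℕ) (x : ℝ), k ≤ l → (1 + |x|) ^ k ≤ (1 + |x|) ^ l := by
    intro k l x hkl
    exact pow_le_pow_right₀ (le_add_of_nonneg_right (abs_nonneg x)) hkl
  -- Step A : differentiate under the integral sign at y₀
  have hy₀R : |y₀| ≤ R := by rw [hR]; linarith
  have hball : ∀ s ∈ Metric.ball y₀ 1, |s| ≤ R := by
    intro s hs
    rw [Metric.mem_ball, Real.dist_eq] at hs
    rw [hR]
    calc |s| = |y₀ + (s - y₀)| := by ring_nf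
      _ ≤ |y₀| + |s - y₀| := abs_add_le _ _
      _ ≤ |y₀| + 1 := by linarith
  set bound : ℝ → ℝ := fun x =>
    (Cd + 2 * Cp) * C₁ ^ 2 * ((1 + |x|) ^ (max n m) * Real.exp (-(2 * |x| ^ C₂))) with hbound
  have hbound_int : Integrable bound :=
    (integrable_poly_exp (max n m) 2 C₂ two_pos hC₂).const_mul _
  have hF'bound : ∀ x s : ℝ, |s| ≤ R →
      |MvPolynomial.eval ![x, s] (MvPolynomial.pderiv 1 P) * N x s
        + MvPolynomial.eval ![x, s] P * G x s| ≤ bound x := by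
    intro x s hs
    have h1 : |MvPolynomial.eval ![x, s] (MvPolynomial.pderiv 1 P) * N x s|
        ≤ Cd * (1 + |x|) ^ (max n m) * (C₁ ^ 2 * Real.exp (-(2 * |x| ^ C₂))) := by
      rw [abs_mul, _root_.abs_of_nonneg (hNnonneg x s)]
      apply mul_le_mul _ (hNb x s hs) (hNnonneg x s) (by positivity)
      exact le_trans (hdb x s hs) (by
        have := hmono m (max n m) x (le_max_right n m)
        nlinarith)
    have h2 : |MvPolynomial.eval ![x, s] P * G x s|
        ≤ Cp * (1 + |x|) ^ (max n m) * (2 * C₁ ^ 2 * Real.exp (-(2 * |x| ^ C₂))) := by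
      rw [abs_mul]
      apply mul_le_mul _ (hGb x s hs) (abs_nonneg _) (by positivity)
      exact le_trans (hpb x s hs) (by
        have := hmono n (max n m) x (le_max_left n m)
        nlinarith)
    calc |MvPolynomial.eval ![x, s] (MvPolynomial.pderiv 1 P) * N x s
          + MvPolynomial.eval ![x, s] P * G x s|
        ≤ |MvPolynomial.eval ![x, s] (MvPolynomial.pderiv 1 P) * N x s|
          + |MvPolynomial.eval ![x, s] P * G x s| := abs_add_le _ _
      _ ≤ Cd * (1 + |x|) ^ (max n m) * (C₁ ^ 2 * Real.exp (-(2 * |x| ^ C₂)))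
          + Cp * (1 + |x|) ^ (max n m) * (2 * C₁ ^ 2 * Real.exp (-(2 * |x| ^ C₂))) :=
            add_le_add h1 h2
      _ = bound x := by rw [hbound]; ring
  -- integrability of the three basic integrands at a fixed parameter value s with |s| ≤ R
  have intPN : ∀ s : ℝ, |s| ≤ R →
      Integrable (fun x => MvPolynomial.eval ![x, s] P * N x s) := by
    intro s hs
    refine Integrable.mono'
      ((integrable_poly_exp n 2 C₂ two_pos hC₂).const_mul (Cp * C₁ ^ 2))
      ((contP P s).mul (contN s)).aestronglyMeasurable
      (Filter.Eventually.of_forall fun x => ?_)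
    rw [Real.norm_eq_abs, abs_mul, _root_.abs_of_nonneg (hNnonneg x s)]
    calc |MvPolynomial.eval ![x, s] P| * N x s
        ≤ (Cp * (1 + |x|) ^ n) * (C₁ ^ 2 * Real.exp (-(2 * |x| ^ C₂))) :=
          mul_le_mul (hpb x s hs) (hNb x s hs) (hNnonneg x s) (by positivity)
      _ = Cp * C₁ ^ 2 * ((1 + |x|) ^ n * Real.exp (-(2 * |x| ^ C₂))) := by ring
  have intDN : Integrable (fun x => MvPolynomial.eval ![x, y₀] (MvPolynomial.pderiv 1 P)
      * N x y₀) := by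
    refine Integrable.mono'
      ((integrable_poly_exp m 2 C₂ two_pos hC₂).const_mul (Cd * C₁ ^ 2))
      ((contP _ y₀).mul (contN y₀)).aestronglyMeasurable
      (Filter.Eventually.of_forall fun x => ?_)
    rw [Real.norm_eq_abs, abs_mul, _root_.abs_of_nonneg (hNnonneg x y₀)]
    calc |MvPolynomial.eval ![x, y₀] (MvPolynomial.pderiv 1 P)| * N x y₀
        ≤ (Cd * (1 + |x|) ^ m) * (C₁ ^ 2 * Real.exp (-(2 * |x| ^ C₂))) :=
          mul_le_mul (hdb x y₀ hy₀R) (hNb x y₀ hy₀R) (hNnonneg x y₀) (by positivity)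
      _ = Cd * C₁ ^ 2 * ((1 + |x|) ^ m * Real.exp (-(2 * |x| ^ C₂))) := by ring
  have intPG : Integrable (fun x => MvPolynomial.eval ![x, y₀] P * G x y₀) := by
    refine Integrable.mono'
      ((integrable_poly_exp n 2 C₂ two_pos hC₂).const_mul (2 * Cp * C₁ ^ 2))
      ((contP P y₀).mul (contG y₀)).aestronglyMeasurable
      (Filter.Eventually.of_forall fun x => ?_)
    rw [Real.norm_eq_abs, abs_mul]
    calc |MvPolynomial.eval ![x, y₀] P| * |G x y₀|
        ≤ (Cp * (1 + |x|) ^ n) * (2 * C₁ ^ 2 * Real.exp (-(2 * |x| ^ C₂))) :=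
          mul_le_mul (hpb x y₀ hy₀R) (hGb x y₀ hy₀R) (abs_nonneg _) (by positivity)
      _ = 2 * Cp * C₁ ^ 2 * ((1 + |x|) ^ n * Real.exp (-(2 * |x| ^ C₂))) := by ring
  -- the parametric integral is identically zero
  have hzero : (fun s : ℝ => ∫ x : ℝ, MvPolynomial.eval ![x, s] P * N x s)
      = fun _ => (0 : ℝ) := by
    funext s
    rw [← horth s]
    congr 1
    funext x
    rw [hP, Complex.sq_norm]
  -- apply differentiation under the integral sign
  have hDUI := hasDerivAt_integral_of_dominated_loc_of_deriv_le
    (F := fun s x => MvPolynomial.eval ![x, s] P * N x s)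
    (F' := fun s x => MvPolynomial.eval ![x, s] (MvPolynomial.pderiv 1 P) * N x s
      + MvPolynomial.eval ![x, s] P * G x s)
    (x₀ := y₀) (bound := bound) (Metric.ball_mem_nhds y₀ one_pos)
    (Filter.Eventually.of_forall fun s =>
      ((contP P s).mul (contN s)).aestronglyMeasurable)
    (intPN y₀ hy₀R)
    (((contP _ y₀).mul (contN y₀)).add ((contP P y₀).mul (contG y₀))).aestronglyMeasurable
    (Filter.Eventually.of_forall fun x => fun s hs => by
      rw [Real.norm_eq_abs]
      exact hF'bound x s (hball s hs))
    hbound_int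
    (Filter.Eventually.of_forall fun x => fun s hs => hFd x s)
  have hkey : (∫ x : ℝ, (MvPolynomial.eval ![x, y₀] (MvPolynomial.pderiv 1 P) * N x y₀
      + MvPolynomial.eval ![x, y₀] P * G x y₀)) = 0 := by
    have h2 := hDUI.2
    rw [hzero] at h2
    exact h2.unique (hasDerivAt_const _ _)
  have hstar : (∫ x : ℝ, MvPolynomial.eval ![x, y₀] (MvPolynomial.pderiv 1 P) * N x y₀)
      + (∫ x : ℝ, MvPolynomial.eval ![x, y₀] P * G x y₀) = 0 := by
    rw [← integral_add intDN intPG]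
    exact hkey
  -- Step B : integration by parts
  set A : ℝ → ℝ := fun x => ∫ t in (0:ℝ)..x, MvPolynomial.eval ![t, y₀] P with hA
  have hAd : ∀ x : ℝ, HasDerivAt A (MvPolynomial.eval ![x, y₀] P) x := by
    intro x
    exact intervalIntegral.integral_hasDerivAt_right
      ((contP P y₀).intervalIntegrable _ _)
      ((contP P y₀).stronglyMeasurableAtFilter _ _)
      (contP P y₀).continuousAt
  have hA_cont : Continuous A := by
    rw [continuous_iff_continuousAt]
    exact fun x => (hAd x).continuousAt
  have hAb : ∀ x : ℝ, |A x| ≤ Cp * (1 + |x|) ^ (n + 1) := by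
    intro x
    have hb : ∀ t ∈ Set.uIoc (0:ℝ) x, ‖MvPolynomial.eval ![t, y₀] P‖ ≤ Cp * (1 + |x|) ^ n := by
      intro t ht
      have htx : |t| ≤ |x| := by
        rcases le_total (0:ℝ) x with h | h
        · rw [Set.uIoc_of_le h] at ht
          rw [_root_.abs_of_pos ht.1, _root_.abs_of_nonneg h]
          exact ht.2
        · rw [Set.uIoc_of_ge h] at ht
          rw [_root_.abs_of_nonpos (le_trans ht.2 le_rfl), _root_.abs_of_nonpos h]
          linarith [ht.1]
      rw [Real.norm_eq_abs]
      refine le_trans (hpb t y₀ hy₀R) ?_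
      exact mul_le_mul_of_nonneg_left
        (pow_le_pow_left₀ (by positivity) (by linarith) n) hCp
    have := intervalIntegral.norm_integral_le_of_norm_le_const hb
    rw [Real.norm_eq_abs] at this
    refine le_trans this ?_
    have h1 : |x - 0| = |x| := by simp
    rw [h1]
    calc Cp * (1 + |x|) ^ n * |x| ≤ Cp * (1 + |x|) ^ n * (1 + |x|) := by
          refine mul_le_mul_of_nonneg_left (by linarith [abs_nonneg x]) (by positivity)
      _ = Cp * (1 + |x|) ^ (n + 1) := by ring
  -- derivative of B := G · y₀ in x
  set Bf' : ℝ → ℝ := fun x => 2 * ((lam.im - (x ^ 3 - 3 * x * y₀ ^ 2)) * N x y₀) with hBf'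
  have hBd : ∀ x : ℝ, HasDerivAt (fun t => G t y₀) (Bf' x) x := by
    intro x
    set z : ℂ := (x : ℂ) + y₀ * Complex.I with hz
    have h1 : HasDerivAt (fun t : ℝ => u (t + y₀ * Complex.I)) (deriv u z) x :=
      horiz_hasDerivAt hu_entire x y₀
    have h2 : HasDerivAt (fun t : ℝ => deriv u (t + y₀ * Complex.I)) (deriv (deriv u) z) x :=
      horiz_hasDerivAt hu' x y₀
    have hconj : HasDerivAt (fun t : ℝ => conj (u (t + y₀ * Complex.I)))
        (conj (deriv u z)) x := h1.star
    have hmul := hconj.mul (h2.const_mul Complex.I)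
    have hre := Complex.reCLM.hasFDerivAt.comp_hasDerivAt x hmul
    have hfin := hre.const_mul (2:ℝ)
    refine hfin.congr_deriv ?_
    -- identify the derivative value
    have hval : (conj (deriv u z) * (Complex.I * deriv u z)
        + conj (u z) * (Complex.I * deriv (deriv u) z)).re
        = (lam.im - (x ^ 3 - 3 * x * y₀ ^ 2)) * N x y₀ := by
      have e1 : (conj (deriv u z) * (Complex.I * deriv u z)).re = 0 := by
        simp [Complex.mul_re, Complex.mul_im, Complex.conj_re, Complex.conj_im]
        ring
      have e2 : conj (u z) * (Complex.I * deriv (deriv u) z)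
          = (-z ^ 3 - Complex.I * lam) * (Complex.normSq (u z) : ℝ) := by
        rw [hu'' z, ← Complex.mul_conj]
        linear_combination (z ^ 3 * u z * conj (u z)) * Complex.I_mul_I
      have e3 : ((-z ^ 3 - Complex.I * lam) * (Complex.normSq (u z) : ℝ)).re
          = (-(z ^ 3).re + lam.im) * Complex.normSq (u z) := by
        simp [Complex.mul_re, Complex.sub_re, Complex.sub_im, Complex.mul_im]
      have e4 : (z ^ 3).re = x ^ 3 - 3 * x * y₀ ^ 2 := by
        rw [hz]
        simp [pow_succ, Complex.mul_re, Complex.mul_im]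
        ring
      rw [Complex.add_re, e1, e2, e3, e4, zero_add]
      have : N x y₀ = Complex.normSq (u z) := by rw [hN, hz]
      rw [this]
      ring
    rw [hBf']
    simp only [ContinuousLinearMap.coe_coe, Complex.reCLM_apply] at *
    rw [hval]
  have hBf'_cont : Continuous Bf' := by
    rw [hBf']
    apply Continuous.mul continuous_const
    apply Continuous.mul
    · fun_prop
    · exact contN y₀
  have hBf'b : ∀ x : ℝ, |Bf' x| ≤ 2 * (|lam.im| + 1 + 3 * y₀ ^ 2) * (1 + |x|) ^ 3
      * (C₁ ^ 2 * Real.exp (-(2 * |x| ^ C₂))) := by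
    intro x
    rw [hBf', abs_mul, abs_mul, _root_.abs_two, _root_.abs_of_nonneg (hNnonneg x y₀)]
    have h1 : |lam.im - (x ^ 3 - 3 * x * y₀ ^ 2)| ≤ (|lam.im| + 1 + 3 * y₀ ^ 2) * (1 + |x|) ^ 3 := by
      have hax : |x| ≤ (1 + |x|) ^ 3 := by nlinarith [abs_nonneg x, sq_nonneg (|x|), pow_nonneg (abs_nonneg x) 3, sq_nonneg (1 + |x|)]
      have hax3 : |x| ^ 3 ≤ (1 + |x|) ^ 3 := by
        apply pow_le_pow_left₀ (abs_nonneg x)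
        linarith [abs_nonneg x]
      have h0 : (1:ℝ) ≤ (1 + |x|) ^ 3 := one_le_pow₀ (by linarith [abs_nonneg x])
      calc |lam.im - (x ^ 3 - 3 * x * y₀ ^ 2)|
          ≤ |lam.im| + |x| ^ 3 + 3 * y₀ ^ 2 * |x| := by
            have := abs_sub (lam.im) (x ^ 3 - 3 * x * y₀ ^ 2)
            have h2 : |x ^ 3 - 3 * x * y₀ ^ 2| ≤ |x| ^ 3 + 3 * y₀ ^ 2 * |x| := by
              calc |x ^ 3 - 3 * x * y₀ ^ 2| ≤ |x ^ 3| + |3 * x * y₀ ^ 2| := abs_sub _ _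
                _ = |x| ^ 3 + 3 * y₀ ^ 2 * |x| := by
                  rw [_root_.abs_pow, abs_mul, abs_mul]
                  simp [_root_.abs_of_nonneg (sq_nonneg y₀)]
                  ring
            calc |lam.im - (x ^ 3 - 3 * x * y₀ ^ 2)|
                ≤ |lam.im| + |x ^ 3 - 3 * x * y₀ ^ 2| := abs_sub _ _
              _ ≤ |lam.im| + (|x| ^ 3 + 3 * y₀ ^ 2 * |x|) := by linarith
              _ = |lam.im| + |x| ^ 3 + 3 * y₀ ^ 2 * |x| := by ring
        _ ≤ |lam.im| * (1 + |x|) ^ 3 + (1 + |x|) ^ 3 + 3 * y₀ ^ 2 * (1 + |x|) ^ 3 := by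
            have := abs_nonneg lam.im
            have := sq_nonneg y₀
            nlinarith
        _ = (|lam.im| + 1 + 3 * y₀ ^ 2) * (1 + |x|) ^ 3 := by ring
    calc 2 * (|lam.im - (x ^ 3 - 3 * x * y₀ ^ 2)| * N x y₀)
        ≤ 2 * (((|lam.im| + 1 + 3 * y₀ ^ 2) * (1 + |x|) ^ 3)
            * (C₁ ^ 2 * Real.exp (-(2 * |x| ^ C₂)))) := by
          exact mul_le_mul_of_nonneg_left
            (mul_le_mul h1 (hNb x y₀ hy₀R) (hNnonneg x y₀) (by positivity)) (by norm_num)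
      _ = 2 * (|lam.im| + 1 + 3 * y₀ ^ 2) * (1 + |x|) ^ 3
            * (C₁ ^ 2 * Real.exp (-(2 * |x| ^ C₂))) := by ring
  -- integrability for IBP
  have intABf' : Integrable (fun x => A x * Bf' x) := by
    refine Integrable.mono'
      ((integrable_poly_exp (n + 4) 2 C₂ two_pos hC₂).const_mul
        (Cp * (2 * (|lam.im| + 1 + 3 * y₀ ^ 2)) * C₁ ^ 2))
      (hA_cont.mul hBf'_cont).aestronglyMeasurable
      (Filter.Eventually.of_forall fun x => ?_)
    rw [Real.norm_eq_abs, abs_mul]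
    calc |A x| * |Bf' x|
        ≤ (Cp * (1 + |x|) ^ (n + 1)) * (2 * (|lam.im| + 1 + 3 * y₀ ^ 2) * (1 + |x|) ^ 3
            * (C₁ ^ 2 * Real.exp (-(2 * |x| ^ C₂)))) :=
          mul_le_mul (hAb x) (hBf'b x) (abs_nonneg _) (by positivity)
      _ = Cp * (2 * (|lam.im| + 1 + 3 * y₀ ^ 2)) * C₁ ^ 2
            * ((1 + |x|) ^ (n + 4) * Real.exp (-(2 * |x| ^ C₂))) := by ring
  -- limits at infinity of A * B
  have htend : Tendsto (fun x => A x * G x y₀) atTop (𝓝 0)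
      ∧ Tendsto (fun x => A x * G x y₀) atBot (𝓝 0) := by
    have hgb : ∀ x : ℝ, |A x * G x y₀|
        ≤ 2 * Cp * C₁ ^ 2 * ((1 + |x|) ^ (n + 1) * Real.exp (-(2 * |x| ^ C₂))) := by
      intro x
      rw [abs_mul]
      calc |A x| * |G x y₀|
          ≤ (Cp * (1 + |x|) ^ (n + 1)) * (2 * C₁ ^ 2 * Real.exp (-(2 * |x| ^ C₂))) :=
            mul_le_mul (hAb x) (hGb x y₀ hy₀R) (abs_nonneg _) (by positivity)
        _ = 2 * Cp * C₁ ^ 2 * ((1 + |x|) ^ (n + 1) * Real.exp (-(2 * |x| ^ C₂))) := by ring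
    obtain ⟨ht, hb⟩ := tendsto_poly_exp_abs (n + 1) 2 C₂ two_pos hC₂
    have ht' : Tendsto (fun x : ℝ => 2 * Cp * C₁ ^ 2
        * ((1 + |x|) ^ (n + 1) * Real.exp (-(2 * |x| ^ C₂)))) atTop (𝓝 0) := by
      simpa using ht.const_mul (2 * Cp * C₁ ^ 2)
    have hb' : Tendsto (fun x : ℝ => 2 * Cp * C₁ ^ 2
        * ((1 + |x|) ^ (n + 1) * Real.exp (-(2 * |x| ^ C₂)))) atBot (𝓝 0) := by
      simpa using hb.const_mul (2 * Cp * C₁ ^ 2)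
    constructor
    · rw [tendsto_zero_iff_norm_tendsto_zero]
      exact squeeze_zero' (Filter.Eventually.of_forall fun x => norm_nonneg _)
        (Filter.Eventually.of_forall fun x => hgb x) ht'
    · rw [tendsto_zero_iff_norm_tendsto_zero]
      exact squeeze_zero' (Filter.Eventually.of_forall fun x => norm_nonneg _)
        (Filter.Eventually.of_forall fun x => hgb x) hb'
  -- IBP
  have hIBP : ∫ x : ℝ, A x * Bf' x
      = 0 - 0 - ∫ x : ℝ, MvPolynomial.eval ![x, y₀] P * G x y₀ := by
    have := MeasureTheory.integral_mul_deriv_eq_deriv_mul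
      (u := A) (u' := fun x => MvPolynomial.eval ![x, y₀] P)
      (v := fun x => G x y₀) (v' := Bf')
      (fun x _ => hAd x) (fun x _ => hBd x) ?_ ?_ htend.2 htend.1
    · exact this
    · exact intABf'
    · exact intPG
  -- Step C : assemble
  have hfinal : ∀ x : ℝ,
      (deriv (fun s : ℝ => p x s) y₀
        + 2 * (x ^ 3 - 3 * x * y₀ ^ 2 - lam.im) * ∫ t in (0 : ℝ)..x, p t y₀)
        * ‖u (x + y₀ * Complex.I)‖ ^ 2
      = MvPolynomial.eval ![x, y₀] (MvPolynomial.pderiv 1 P) * N x y₀ - A x * Bf' x := by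
    intro x
    have hd : deriv (fun s : ℝ => p x s) y₀
        = MvPolynomial.eval ![x, y₀] (MvPolynomial.pderiv 1 P) := by
      have : (fun s : ℝ => p x s) = fun s => MvPolynomial.eval ![x, s] P := by
        funext s; exact hP x s
      rw [this]
      exact (mv_hasDerivAt P x y₀).deriv
    have hInt : (∫ t in (0 : ℝ)..x, p t y₀) = A x := by
      rw [hA]
      congr 1
      funext t
      exact hP t y₀
    rw [hd, hInt, Complex.sq_norm]
    rw [hBf']
    have : Complex.normSq (u (↑x + ↑y₀ * Complex.I)) = N x y₀ := by rw [hN]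
    rw [this]
    ring
  calc ∫ x : ℝ, (deriv (fun s : ℝ => p x s) y₀
        + 2 * (x ^ 3 - 3 * x * y₀ ^ 2 - lam.im) * ∫ t in (0 : ℝ)..x, p t y₀)
        * ‖u (x + y₀ * Complex.I)‖ ^ 2
      = ∫ x : ℝ, (MvPolynomial.eval ![x, y₀] (MvPolynomial.pderiv 1 P) * N x y₀
          - A x * Bf' x) := by
        congr 1
        funext x
        exact hfinal x
    _ = (∫ x : ℝ, MvPolynomial.eval ![x, y₀] (MvPolynomial.pderiv 1 P) * N x y₀)
          - ∫ x : ℝ, A x * Bf' x := integral_sub intDN intABf'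
    _ = 0 := by
        rw [hIBP]
        simp only [zero_sub, sub_neg_eq_add, zero_sub] at *
        linarith [hstar]
end

section
/- The function F : ℝ → ℝ defined by F(y) = ∫_ℝ |u(x+iy)|² dx is a convex function of y. -/
open Complex Real ComplexConjugate MeasureTheory

open Set Function in
lemma integrableOn_exp_neg_rpow_Ioi {c : ℝ} (hc : 0 < c) :
    IntegrableOn (fun x : ℝ => Real.exp (-x ^ c)) (Ioi 0) := by
  have hf : IntegrableOn (fun y : ℝ => c⁻¹ * (y ^ (1/c - 1) * Real.exp (-y))) (Ioi 0) := by
    have := Real.GammaIntegral_convergent (s := 1/c) (by positivity)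
    exact IntegrableOn.congr_fun (this.const_mul c⁻¹)
      (fun y hy => by ring_nf) measurableSet_Ioi
  have h := (integrableOn_Ioi_comp_rpow_iff
      (fun y : ℝ => c⁻¹ * (y ^ (1/c - 1) * Real.exp (-y))) (p := c) hc.ne').mpr hf
  refine IntegrableOn.congr_fun h (fun x hx => ?_) measurableSet_Ioi
  have hx0 : (0:ℝ) < x := hx
  have h1 : ((x : ℝ) ^ c) ^ (1/c - 1) = x ^ (1 - c) := by
    rw [← Real.rpow_mul hx0.le]
    congr 1
    field_simp
  rw [smul_eq_mul, h1, abs_of_pos hc,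
    show c * x ^ (c-1) * (c⁻¹ * (x ^ (1-c) * rexp (-x ^ c)))
      = (c * c⁻¹) * (x ^ (c-1) * x ^ (1-c)) * rexp (-x ^ c) by ring,
    mul_inv_cancel₀ hc.ne', ← Real.rpow_add hx0]
  norm_num

open Set Function in
lemma integrable_exp_neg_abs_rpow {c : ℝ} (hc : 0 < c) :
    Integrable (fun x : ℝ => Real.exp (-|x| ^ c)) := by
  have hIoi : IntegrableOn (fun x : ℝ => Real.exp (-|x| ^ c)) (Ioi 0) :=
    (integrableOn_exp_neg_rpow_Ioi hc).congr_fun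
      (fun x hx => by rw [abs_of_pos (mem_Ioi.mp hx)]) measurableSet_Ioi
  rw [← integrableOn_univ, ← @Iio_union_Ici _ _ (0 : ℝ), integrableOn_union,
    integrableOn_Ici_iff_integrableOn_Ioi]
  refine ⟨?_, hIoi⟩
  rw [← (Measure.measurePreserving_neg (volume : Measure ℝ)).integrableOn_comp_preimage
      (Homeomorph.neg ℝ).measurableEmbedding]
  simpa only [Function.comp_def, abs_neg, neg_preimage, neg_Iio, neg_neg, neg_zero] using hIoi

open Set Function in
lemma integrable_K_exp_shift {c : ℝ} (hc : 0 < c) (r K : ℝ) (hr : 0 < r) :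
    Integrable (fun x : ℝ => K * Real.exp (-(max (|x| - r) 0) ^ c)) := by
  have hcont : Continuous (fun x : ℝ => K * Real.exp (-(max (|x| - r) 0) ^ c)) := by
    apply continuous_const.mul
    apply Real.continuous_exp.comp
    apply Continuous.neg
    exact ((_root_.continuous_abs.sub continuous_const).max continuous_const).rpow_const
      (fun x => Or.inr hc.le)
  have hbase : Integrable (fun x : ℝ => K * Real.exp (-|x| ^ c)) :=
    (integrable_exp_neg_abs_rpow hc).const_mul K
  have hIci : IntegrableOn (fun x : ℝ => K * Real.exp (-(max (|x| - r) 0) ^ c)) (Ici r) := by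
    have h1 := (hbase.comp_sub_right r).integrableOn (s := Ici r)
    refine h1.congr_fun (fun x hx => ?_) measurableSet_Ici
    have hx' : r ≤ x := hx
    have hx0 : (0:ℝ) ≤ x := le_trans hr.le hx'
    beta_reduce
    rw [_root_.abs_of_nonneg hx0, max_eq_left (by linarith : (0:ℝ) ≤ x - r),
      _root_.abs_of_nonneg (by linarith : (0:ℝ) ≤ x - r)]
  have hIic : IntegrableOn (fun x : ℝ => K * Real.exp (-(max (|x| - r) 0) ^ c)) (Iic (-r)) := by
    have h1 := (hbase.comp_add_right r).integrableOn (s := Iic (-r))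
    refine h1.congr_fun (fun x hx => ?_) measurableSet_Iic
    have hx' : x ≤ -r := hx
    have hx0 : x ≤ 0 := le_trans hx' (by linarith)
    beta_reduce
    rw [_root_.abs_of_nonpos hx0, max_eq_left (by linarith : (0:ℝ) ≤ -x - r),
      _root_.abs_of_nonpos (by linarith : x + r ≤ 0)]
    ring_nf
  have hIcc : IntegrableOn (fun x : ℝ => K * Real.exp (-(max (|x| - r) 0) ^ c)) (Icc (-r) r) :=
    hcont.integrableOn_Icc
  have hall : IntegrableOn (fun x : ℝ => K * Real.exp (-(max (|x| - r) 0) ^ c))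
      (Iic (-r) ∪ (Icc (-r) r ∪ Ici r)) := hIic.union (hIcc.union hIci)
  rw [← integrableOn_univ]
  refine hall.mono_set ?_
  intro x _
  rcases le_total x (-r) with h1 | h1
  · exact Or.inl h1
  · rcases le_total x r with h2 | h2
    · exact Or.inr (Or.inl ⟨h1, h2⟩)
    · exact Or.inr (Or.inr h2)

open Set Function in
lemma abs_sq_le_circle_avg {u : ℂ → ℂ} (hu : Differentiable ℂ u) (c : ℂ) {r : ℝ} (hr : 0 < r) :
    ‖u c‖ ^ 2
      ≤ (2*π)⁻¹ * ∫ θ in (0:ℝ)..(2*π), ‖u (circleMap c r θ)‖ ^ 2 := by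
  set v : ℂ → ℂ := fun z => u z * u z with hv
  have hvd : DiffContOnCl ℂ v (Metric.ball c r) :=
    (hu.mul hu).diffContOnCl
  have h := hvd.circleIntegral_sub_inv_smul (w := c) (Metric.mem_ball_self hr)
  rw [circleIntegral] at h
  have hme : ∀ θ : ℝ, deriv (circleMap c r) θ • (circleMap c r θ - c)⁻¹ • v (circleMap c r θ)
      = Complex.I • v (circleMap c r θ) := by
    intro θ
    have hne : circleMap 0 r θ ≠ 0 := by
      simp [circleMap, hr.ne', Complex.exp_ne_zero]
    rw [deriv_circleMap, circleMap_sub_center, smul_eq_mul, smul_eq_mul, smul_eq_mul]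
    field_simp
  simp only [hme] at h
  rw [intervalIntegral.integral_smul] at h
  have h2 : (∫ θ in (0:ℝ)..(2*π), v (circleMap c r θ)) = (2 * π : ℂ) • v c := by
    have h' : Complex.I * (∫ θ in (0:ℝ)..(2*π), v (circleMap c r θ))
        = Complex.I * ((2 * π : ℂ) * v c) := by
      rw [← smul_eq_mul, h]; rw [smul_eq_mul]; ring
    have := mul_left_cancel₀ Complex.I_ne_zero h'
    rw [this, smul_eq_mul]
  have h3 : 2*π * ‖v c‖ ≤ ∫ θ in (0:ℝ)..(2*π), ‖v (circleMap c r θ)‖ := by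
    have := intervalIntegral.norm_integral_le_integral_norm
      (f := fun θ => v (circleMap c r θ)) (a := 0) (b := 2*π) (μ := volume) (by positivity)
    rw [h2] at this
    simpa [norm_smul, _root_.abs_of_nonneg Real.pi_pos.le] using this
  have habs : ∀ z, ‖v z‖ = ‖u z‖ ^ 2 := by
    intro z; rw [hv]; simp only [norm_mul]; ring
  rw [habs] at h3
  have h4 : (∫ θ in (0:ℝ)..(2*π), ‖v (circleMap c r θ)‖)
      = ∫ θ in (0:ℝ)..(2*π), ‖u (circleMap c r θ)‖ ^ 2 := by
    congr 1; ext θ; rw [habs]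
  rw [h4] at h3
  have h2pi : (0:ℝ) < 2*π := by positivity
  calc ‖u c‖ ^ 2 = (2*π)⁻¹ * (2*π * ‖u c‖^2) := by field_simp
    _ ≤ _ := by
        exact mul_le_mul_of_nonneg_left h3 (by positivity)

open Set Function in
lemma convexOn_of_submean (F : ℝ → ℝ) (hF : Continuous F)
    (h : ∀ y r : ℝ, 0 < r →
      F y ≤ (2*π)⁻¹ * ∫ θ in (0:ℝ)..(2*π), F (y + r * Real.sin θ)) :
    ConvexOn ℝ Set.univ F := by
  have h2pi : (0:ℝ) < 2*π := by positivity
  have hcs : ∀ t r : ℝ, Continuous fun θ : ℝ => t + r * Real.sin θ :=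
    fun t r => continuous_const.add (continuous_const.mul Real.continuous_sin)
  -- sub-mean property for F minus an affine function
  have hsub : ∀ α β y r : ℝ, 0 < r →
      F y - (α + β*y) ≤ (2*π)⁻¹ * ∫ θ in (0:ℝ)..(2*π),
        (F (y + r * Real.sin θ) - (α + β*(y + r * Real.sin θ))) := by
    intro α β y r hr
    have hFi : IntervalIntegrable (fun θ => F (y + r * Real.sin θ)) volume 0 (2*π) :=
      (hF.comp (hcs y r)).intervalIntegrable _ _
    have hLi : IntervalIntegrable (fun θ => α + β*(y + r * Real.sin θ)) volume 0 (2*π) :=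
      (continuous_const.add (continuous_const.mul (hcs y r))).intervalIntegrable _ _
    have hLint : (∫ θ in (0:ℝ)..(2*π), (α + β*(y + r * Real.sin θ)))
        = 2*π*(α + β*y) := by
      have he : (fun θ : ℝ => α + β*(y + r * Real.sin θ))
          = fun θ : ℝ => (α + β*y) + (β*r) * Real.sin θ := by
        ext θ; ring
      rw [he, intervalIntegral.integral_add (intervalIntegrable_const)
        ((Real.continuous_sin.intervalIntegrable _ _).const_mul _),
        intervalIntegral.integral_const, intervalIntegral.integral_const_mul,
        integral_sin]
      simp only [smul_eq_mul, sub_zero, Real.cos_zero, Real.cos_two_pi, sub_self, mul_zero,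
        add_zero]
    rw [intervalIntegral.integral_sub hFi hLi, hLint, mul_sub, ← mul_assoc,
      inv_mul_cancel₀ h2pi.ne', one_mul]
    have := h y r hr
    linarith
  -- key secant estimate
  have key : ∀ p q : ℝ, p < q → ∀ z ∈ Icc p q,
      F z ≤ F p + (F q - F p)/(q - p) * (z - p) := by
    intro p q hpq z hz
    set s : ℝ := (F q - F p)/(q - p) with hs
    set φ : ℝ → ℝ := fun t => F t - ((F p - s*p) + s*t) with hφ
    have hφeq : ∀ t, φ t = F t - (F p + s*(t - p)) := by
      intro t; rw [hφ]; ring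
    have hφc : Continuous φ := by
      rw [hφ]
      exact hF.sub (continuous_const.add (continuous_const.mul continuous_id))
    have hφp : φ p = 0 := by rw [hφeq]; ring
    have hsq : s * (q - p) = F q - F p := by
      rw [hs, div_mul_cancel₀ _ (sub_ne_zero.mpr hpq.ne')]
    have hφq : φ q = 0 := by rw [hφeq]; linarith
    obtain ⟨z₀, hz₀K, hmax⟩ := isCompact_Icc.exists_isMaxOn (α := ℝ)
      (nonempty_Icc.mpr hpq.le) hφc.continuousOn (f := φ)
    set m : ℝ := φ z₀ with hm
    have hmle : ∀ t ∈ Icc p q, φ t ≤ m := fun t ht => hmax ht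
    have hm0 : m ≤ 0 := by
      by_contra hmpos
      push_neg at hmpos
      set S : Set ℝ := Icc p q ∩ φ ⁻¹' {m} with hS
      have hSclosed : IsClosed S :=
        isClosed_Icc.inter (isClosed_singleton.preimage hφc)
      have hz₀S : z₀ ∈ S := ⟨hz₀K, rfl⟩
      have hpS : p ∉ S := by
        intro hp; have : φ p = m := hp.2; rw [hφp] at this; linarith
      have hqS : q ∉ S := by
        intro hq; have : φ q = m := hq.2; rw [hφq] at this; linarith
      have hSopen : IsOpen S := by
        rw [Metric.isOpen_iff]
        intro t htS
        have htI : t ∈ Ioo p q := by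
          rcases htS.1.1.lt_or_eq with h1 | h1
          · rcases htS.1.2.lt_or_eq with h2 | h2
            · exact ⟨h1, h2⟩
            · exact absurd (h2 ▸ htS) hqS
          · exact absurd (h1 ▸ htS) hpS
        set r₀ : ℝ := min (t - p) (q - t) with hr₀
        have hr₀pos : 0 < r₀ := lt_min (by linarith [htI.1]) (by linarith [htI.2])
        refine ⟨r₀, hr₀pos, ?_⟩
        intro s' hs'
        rw [Metric.mem_ball, Real.dist_eq] at hs'
        rcases eq_or_ne s' t with rfl | hne
        · exact htS
        have hrpos : 0 < |s' - t| := abs_pos.mpr (sub_ne_zero.mpr hne)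
        set r : ℝ := |s' - t| with hr
        have hrp : r < t - p := lt_of_lt_of_le hs' (min_le_left _ _)
        have hrq : r < q - t := lt_of_lt_of_le hs' (min_le_right _ _)
        have hIcc : ∀ θ : ℝ, t + r * Real.sin θ ∈ Icc p q := by
          intro θ
          have h1 : |r * Real.sin θ| ≤ r := by
            rw [abs_mul, abs_of_pos hrpos]
            exact mul_le_of_le_one_right hrpos.le (abs_sin_le_one θ)
          have h2 := abs_le.mp h1
          exact ⟨by linarith [h2.1], by linarith [h2.2]⟩
        set g : ℝ → ℝ := fun θ => m - φ (t + r * Real.sin θ) with hg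
        have hgc : Continuous g := by
          rw [hg]; exact continuous_const.sub (hφc.comp (hcs t r))
        have hgnn : ∀ θ, 0 ≤ g θ := fun θ => sub_nonneg.mpr (hmle _ (hIcc θ))
        have hgint : (∫ θ in (0:ℝ)..(2*π), g θ) ≤ 0 := by
          have htm : φ t = m := htS.2
          have h2 : m ≤ (2*π)⁻¹ * ∫ θ in (0:ℝ)..(2*π), φ (t + r * Real.sin θ) := by
            have h1 := hsub (F p - s*p) s t r hrpos
            have he : ∀ w : ℝ, F w - (F p - s*p + s*w) = φ w := fun w => rfl
            simp only [he] at h1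
            rwa [htm] at h1
          have hφi : IntervalIntegrable (fun θ => φ (t + r * Real.sin θ)) volume 0 (2*π) :=
            (hφc.comp (hcs t r)).intervalIntegrable _ _
          rw [hg]
          rw [intervalIntegral.integral_sub intervalIntegrable_const hφi,
            intervalIntegral.integral_const]
          have h3 : 2*π*m ≤ ∫ θ in (0:ℝ)..(2*π), φ (t + r * Real.sin θ) := by
            have := mul_le_mul_of_nonneg_left h2 h2pi.le
            rwa [← mul_assoc, mul_inv_cancel₀ h2pi.ne', one_mul] at this
          simp only [smul_eq_mul, sub_zero]
          linarith
        have hgzero : ∀ θ ∈ Ioo (0:ℝ) (2*π), g θ = 0 := by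
          intro θ hθ
          by_contra hgθ
          have hpos := (intervalIntegral.integral_pos_iff_support_of_nonneg_ae
            (f := g) (a := 0) (b := 2*π) (μ := volume)
            (Filter.Eventually.of_forall hgnn) (hgc.intervalIntegrable _ _))
          have hnpos : ¬ (0 < ∫ θ in (0:ℝ)..(2*π), g θ) := not_lt.mpr hgint
          rw [hpos] at hnpos
          push_neg at hnpos
          have hvol : volume (support g ∩ Ioc 0 (2*π)) = 0 :=
            le_antisymm (hnpos h2pi) (zero_le)
          have hne' : (support g ∩ Ioo 0 (2*π)).Nonempty := ⟨θ, hgθ, hθ⟩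
          have hopen : IsOpen (support g ∩ Ioo 0 (2*π)) :=
            (hgc.isOpen_support).inter isOpen_Ioo
          have hposvol := hopen.measure_pos volume hne'
          have hle : volume (support g ∩ Ioo 0 (2*π)) ≤ volume (support g ∩ Ioc 0 (2*π)) :=
            measure_mono (inter_subset_inter_right _ Ioo_subset_Ioc_self)
          rw [hvol] at hle
          exact absurd (le_antisymm hle (zero_le)) hposvol.ne'
        have habs1 : |(s' - t)/r| = 1 := by
          rw [abs_div, abs_of_pos hrpos, hr, div_self hrpos.ne']
        have hbnd := abs_le.mp habs1.le
        obtain ⟨θ, hθ, hθeq⟩ : ∃ θ ∈ Ioo (0:ℝ) (2*π), t + r * Real.sin θ = s' := by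
          refine ⟨π - Real.arcsin ((s' - t)/r), ?_, ?_⟩
          · constructor
            · have := Real.arcsin_le_pi_div_two ((s' - t)/r)
              linarith [Real.pi_pos]
            · have := Real.neg_pi_div_two_le_arcsin ((s' - t)/r)
              linarith [Real.pi_pos]
          · rw [Real.sin_pi_sub, Real.sin_arcsin hbnd.1 hbnd.2]
            field_simp
            ring
        have hz := hgzero θ hθ
        rw [hg] at hz
        simp only at hz
        rw [hθeq] at hz
        exact ⟨hθeq ▸ hIcc θ, by simp; linarith⟩
      have := isClopen_iff.mp ⟨hSclosed, hSopen⟩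
      rcases this with h1 | h1
      · rw [h1] at hz₀S; exact hz₀S
      · rw [h1] at hqS; exact hqS (mem_univ q)
    have hzle := hmle z hz
    have hfin : φ z ≤ 0 := le_trans hzle hm0
    rw [hφeq] at hfin
    linarith
  refine ⟨convex_univ, ?_⟩
  intro x _ y _ a b ha hb hab
  rcases lt_trichotomy x y with hxy | hxy | hxy
  · have e1 : a*x + b*y = x + b*(y-x) := by linear_combination x * hab
    have e2 : a*x + b*y = y - a*(y-x) := by linear_combination y * hab
    have hz : a • x + b • y ∈ Icc x y := by
      constructor
      · simp only [smul_eq_mul]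
        rw [e1]; linarith [mul_nonneg hb (sub_pos.mpr hxy).le]
      · simp only [smul_eq_mul]
        rw [e2]; linarith [mul_nonneg ha (sub_pos.mpr hxy).le]
    have hk := key x y hxy _ hz
    simp only [smul_eq_mul] at *
    have hzx : a * x + b * y - x = b * (y - x) := by linear_combination x * hab
    rw [hzx] at hk
    have hne : y - x ≠ 0 := sub_ne_zero.mpr hxy.ne'
    have heq : (F y - F x)/(y-x) * (b*(y-x)) = b * (F y - F x) := by
      field_simp
    rw [heq] at hk
    have : F x + b * (F y - F x) = a * F x + b * F y := by
      linear_combination (-(F x)) * hab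
    linarith
  · subst hxy
    have hxx : a • x + b • x = x := by
      simp only [smul_eq_mul]; linear_combination x * hab
    rw [hxx]
    have : a * F x + b * F x = F x := by linear_combination (F x) * hab
    simp only [smul_eq_mul]; linarith
  · have e1 : a*x + b*y = y + a*(x-y) := by linear_combination y * hab
    have e2 : a*x + b*y = x - b*(x-y) := by linear_combination x * hab
    have hz : a • x + b • y ∈ Icc y x := by
      constructor
      · simp only [smul_eq_mul]
        rw [e1]; linarith [mul_nonneg ha (sub_pos.mpr hxy).le]
      · simp only [smul_eq_mul]
        rw [e2]; linarith [mul_nonneg hb (sub_pos.mpr hxy).le]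
    have hk := key y x hxy _ hz
    simp only [smul_eq_mul] at *
    have hzx : a * x + b * y - y = a * (x - y) := by linear_combination y * hab
    rw [hzx] at hk
    have hne : x - y ≠ 0 := sub_ne_zero.mpr hxy.ne'
    have heq : (F x - F y)/(x-y) * (a*(x-y)) = a * (F x - F y) := by
      field_simp
    rw [heq] at hk
    have : F y + a * (F x - F y) = a * F x + b * F y := by
      linear_combination (-(F y)) * hab
    linarith

set_option maxHeartbeats 1000000 in
/-- Let `u` be an eigenfunction of the cubic PT-symmetric oscillator
`-u'' - (iz)³u = lam·u` with eigenvalue `lam`.  Then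
`F(y) = ∫_ℝ |u(x+iy)|² dx` is a convex function of `y`. -/
theorem integral_abs_u_sq_convex
    (lam : ℂ) (u : ℂ → ℂ)
    (hu_entire : Differentiable ℂ u)
    (hu_ne : u ≠ 0)
    (hode : ∀ w : ℂ, iteratedDeriv 2 u w = (Complex.I * w ^ 3 - lam) * u w)
    (hdecay : ∀ M : ℝ, 0 < M → ∃ C₁ > (0 : ℝ), ∃ C₂ > (0 : ℝ), ∀ x y : ℝ, |y| ≤ M →
      ‖u (x + y * Complex.I)‖ + ‖deriv u (x + y * Complex.I)‖
        ≤ C₁ * Real.exp (-(|x| ^ C₂))) :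
    ConvexOn ℝ Set.univ
      (fun y : ℝ => ∫ x : ℝ, ‖u (x + y * Complex.I)‖ ^ 2) := by
  classical
  set f : ℝ → ℝ → ℝ := fun y x => ‖u (x + y * Complex.I)‖ ^ 2 with hf
  -- continuity facts
  have hmapc : Continuous fun p : ℝ × ℝ => ((p.2 : ℂ) + (p.1 : ℂ) * Complex.I) :=
    (Complex.continuous_ofReal.comp continuous_snd).add
      ((Complex.continuous_ofReal.comp continuous_fst).mul continuous_const)
  have hfc : Continuous fun p : ℝ × ℝ => f p.1 p.2 := by
    apply Continuous.pow
    apply continuous_norm.comp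
    exact hu_entire.continuous.comp hmapc
  have hcont2 : ∀ y : ℝ, Continuous (fun x : ℝ => f y x) := by
    intro y
    apply Continuous.pow
    apply continuous_norm.comp
    apply hu_entire.continuous.comp
    exact Complex.continuous_ofReal.add continuous_const
  have hcont1 : ∀ x : ℝ, Continuous (fun y : ℝ => f y x) := by
    intro x
    apply Continuous.pow
    apply continuous_norm.comp
    apply hu_entire.continuous.comp
    exact continuous_const.add (Complex.continuous_ofReal.mul continuous_const)
  have hfnn : ∀ y x, 0 ≤ f y x := fun y x => pow_nonneg (norm_nonneg _) 2
  -- squared decay bound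
  have hbound : ∀ M : ℝ, 0 < M → ∃ C₁ > (0:ℝ), ∃ C₂ > (0:ℝ), ∀ x y : ℝ, |y| ≤ M →
      f y x ≤ C₁^2 * Real.exp (-(|x| ^ C₂)) := by
    intro M hM
    obtain ⟨C₁, hC₁, C₂, hC₂, hb⟩ := hdecay M hM
    refine ⟨C₁, hC₁, C₂, hC₂, fun x y hy => ?_⟩
    have h1 := hb x y hy
    have h2 : ‖u (x + y * Complex.I)‖ ≤ C₁ * Real.exp (-(|x| ^ C₂)) :=
      le_trans (le_add_of_nonneg_right (norm_nonneg _)) h1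
    have he1 : Real.exp (-(|x| ^ C₂)) ≤ 1 :=
      Real.exp_le_one_iff.mpr (neg_nonpos.mpr (Real.rpow_nonneg (abs_nonneg x) _))
    have hepos : 0 < Real.exp (-(|x| ^ C₂)) := Real.exp_pos _
    calc f y x ≤ (C₁ * Real.exp (-(|x| ^ C₂)))^2 :=
          pow_le_pow_left₀ (norm_nonneg _) h2 2
      _ = C₁^2 * (Real.exp (-(|x| ^ C₂)) * Real.exp (-(|x| ^ C₂))) := by ring
      _ ≤ C₁^2 * (Real.exp (-(|x| ^ C₂)) * 1) := by
          apply mul_le_mul_of_nonneg_left _ (by positivity)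
          exact mul_le_mul_of_nonneg_left he1 hepos.le
      _ = C₁^2 * Real.exp (-(|x| ^ C₂)) := by ring
  have hdom : ∀ (C₁ : ℝ) {C₂ : ℝ}, 0 < C₂ →
      Integrable (fun x : ℝ => C₁^2 * Real.exp (-(|x| ^ C₂))) :=
    fun C₁ _ h => (integrable_exp_neg_abs_rpow h).const_mul _
  -- integrability of the slices
  have hfint : ∀ y : ℝ, Integrable (f y) := by
    intro y
    obtain ⟨C₁, hC₁, C₂, hC₂, hb⟩ := hbound (|y| + 1) (by positivity)
    refine Integrable.mono' (hdom C₁ hC₂) (hcont2 y).aestronglyMeasurable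
      (Filter.Eventually.of_forall fun x => ?_)
    rw [Real.norm_of_nonneg (hfnn y x)]
    exact hb x y (by linarith [abs_nonneg y])
  -- continuity of F
  have hFcont : Continuous (fun y : ℝ => ∫ x : ℝ, f y x) := by
    rw [continuous_iff_continuousAt]
    intro y₀
    obtain ⟨C₁, hC₁, C₂, hC₂, hb⟩ := hbound (|y₀| + 1) (by positivity)
    apply continuousAt_of_dominated (bound := fun x => C₁^2 * Real.exp (-(|x| ^ C₂)))
    · exact Filter.Eventually.of_forall fun y => (hcont2 y).aestronglyMeasurable
    · have hev : ∀ᶠ y in nhds y₀, |y| ≤ |y₀| + 1 := by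
        have hball : Metric.ball y₀ 1 ∈ nhds y₀ := Metric.ball_mem_nhds _ one_pos
        filter_upwards [hball] with y hy
        rw [Metric.mem_ball, Real.dist_eq] at hy
        have := abs_sub_abs_le_abs_sub y y₀
        linarith
      filter_upwards [hev] with y hy
      refine Filter.Eventually.of_forall fun x => ?_
      rw [Real.norm_of_nonneg (hfnn y x)]
      exact hb x y hy
    · exact hdom C₁ hC₂
    · exact Filter.Eventually.of_forall fun x => (hcont1 x).continuousAt
  -- sub-mean value property of F
  have hsubmean : ∀ y₀ r : ℝ, 0 < r →
      (∫ x : ℝ, f y₀ x) ≤ (2*π)⁻¹ * ∫ θ in (0:ℝ)..(2*π), ∫ x : ℝ, f (y₀ + r * Real.sin θ) x := by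
    intro y₀ r hr
    have h2pi : (0:ℝ) < 2*π := by positivity
    obtain ⟨C₁, hC₁, C₂, hC₂, hb⟩ := hbound (|y₀| + r + 1) (by positivity)
    set G : ℝ → ℝ := fun x => C₁^2 * Real.exp (-(max (|x| - r) 0) ^ C₂) with hG
    have hGint : Integrable G := integrable_K_exp_shift hC₂ r _ hr
    set H : ℝ × ℝ → ℝ := fun p => f (y₀ + r * Real.sin p.1) (p.2 + r * Real.cos p.1) with hH
    have hcirc : ∀ θ x : ℝ, circleMap ((x:ℂ) + (y₀:ℂ) * Complex.I) r θ
        = ((x + r * Real.cos θ : ℝ) : ℂ) + ((y₀ + r * Real.sin θ : ℝ) : ℂ) * Complex.I := by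
      intro θ x
      simp only [circleMap, Complex.exp_mul_I, ← Complex.ofReal_cos, ← Complex.ofReal_sin]
      push_cast
      ring
    have hHbnd : ∀ θ x : ℝ, H (θ, x) ≤ G x := by
      intro θ x
      have hsin : |Real.sin θ| ≤ 1 := abs_sin_le_one θ
      have hcos : |Real.cos θ| ≤ 1 := abs_cos_le_one θ
      have hy : |y₀ + r * Real.sin θ| ≤ |y₀| + r + 1 := by
        have h1 : |y₀ + r * Real.sin θ| ≤ |y₀| + |r * Real.sin θ| := abs_add_le _ _
        have h2 : |r * Real.sin θ| ≤ r := by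
          rw [abs_mul, _root_.abs_of_pos hr]
          exact mul_le_of_le_one_right hr.le hsin
        linarith
      have h1 : H (θ, x) ≤ C₁^2 * Real.exp (-(|x + r * Real.cos θ| ^ C₂)) :=
        hb (x + r * Real.cos θ) _ hy
      refine le_trans h1 ?_
      apply mul_le_mul_of_nonneg_left _ (by positivity)
      rw [Real.exp_le_exp]
      apply neg_le_neg
      apply Real.rpow_le_rpow (le_max_right _ _) _ hC₂.le
      apply max_le _ (abs_nonneg _)
      have h3 : |x| - |x + r * Real.cos θ| ≤ |x - (x + r * Real.cos θ)| :=
        abs_sub_abs_le_abs_sub _ _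
      have h4 : |x - (x + r * Real.cos θ)| = |r * Real.cos θ| := by
        rw [show x - (x + r * Real.cos θ) = -(r * Real.cos θ) by ring, abs_neg]
      have h5 : |r * Real.cos θ| ≤ r := by
        rw [abs_mul, _root_.abs_of_pos hr]
        exact mul_le_of_le_one_right hr.le hcos
      linarith
    have hHcont : Continuous H := by
      have c1 : Continuous fun p : ℝ × ℝ => p.2 + r * Real.cos p.1 :=
        continuous_snd.add (continuous_const.mul (Real.continuous_cos.comp continuous_fst))
      have c2 : Continuous fun p : ℝ × ℝ => y₀ + r * Real.sin p.1 :=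
        continuous_const.add (continuous_const.mul (Real.continuous_sin.comp continuous_fst))
      apply Continuous.pow
      apply continuous_norm.comp
      apply hu_entire.continuous.comp
      exact (Complex.continuous_ofReal.comp c1).add
        ((Complex.continuous_ofReal.comp c2).mul continuous_const)
    set μ : Measure ℝ := volume.restrict (Set.Ioc 0 (2*π)) with hμ
    haveI : IsFiniteMeasure μ := by
      constructor
      rw [hμ, Measure.restrict_apply_univ]
      exact measure_Ioc_lt_top
    have hHnn : ∀ p : ℝ × ℝ, 0 ≤ H p := fun p => hfnn _ _
    have hHint : Integrable H (μ.prod volume) := by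
      rw [integrable_prod_iff hHcont.aestronglyMeasurable]
      constructor
      · refine Filter.Eventually.of_forall fun θ => ?_
        refine Integrable.mono' hGint
          ((hHcont.comp (continuous_const.prodMk continuous_id)).aestronglyMeasurable)
          (Filter.Eventually.of_forall fun x => ?_)
        rw [Real.norm_of_nonneg (hHnn (θ, x))]
        exact hHbnd θ x
      · refine Integrable.mono' (integrable_const (∫ x : ℝ, G x))
          (hHcont.norm.aestronglyMeasurable.integral_prod_right')
          (Filter.Eventually.of_forall fun θ => ?_)
        rw [Real.norm_of_nonneg (integral_nonneg fun x => norm_nonneg _)]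
        refine integral_mono_of_nonneg (Filter.Eventually.of_forall fun x => norm_nonneg _)
          hGint (Filter.Eventually.of_forall fun x => ?_)
        show ‖H (θ, x)‖ ≤ G x
        rw [Real.norm_of_nonneg (hHnn (θ, x))]
        exact hHbnd θ x
    have hswap : (∫ θ, ∫ x, H (θ, x) ∂volume ∂μ) = ∫ x, ∫ θ, H (θ, x) ∂μ ∂volume :=
      integral_integral_swap hHint
    have hinner : ∀ θ : ℝ, (∫ x : ℝ, H (θ, x)) = ∫ x : ℝ, f (y₀ + r * Real.sin θ) x := by
      intro θ
      exact integral_add_right_eq_self (fun x => f (y₀ + r * Real.sin θ) x) (r * Real.cos θ)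
    have hpt : ∀ x : ℝ, f y₀ x ≤ (2*π)⁻¹ * ∫ θ in (0:ℝ)..(2*π), H (θ, x) := by
      intro x
      have h1 := abs_sq_le_circle_avg hu_entire ((x:ℂ) + (y₀:ℂ) * Complex.I) hr
      have h2 : (fun θ : ℝ => ‖u (circleMap ((x:ℂ) + (y₀:ℂ) * Complex.I) r θ)‖ ^ 2)
          = fun θ : ℝ => H (θ, x) := by
        funext θ
        rw [hcirc θ x]
      rwa [h2] at h1
    have hRHSint : Integrable (fun x : ℝ => (2*π)⁻¹ * ∫ θ, H (θ, x) ∂μ) :=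
      (hHint.integral_prod_right).const_mul _
    have hioc : ∀ x : ℝ, (∫ θ in (0:ℝ)..(2*π), H (θ, x)) = ∫ θ, H (θ, x) ∂μ := by
      intro x
      rw [intervalIntegral.integral_of_le h2pi.le, hμ]
    calc (∫ x : ℝ, f y₀ x)
        ≤ ∫ x : ℝ, (2*π)⁻¹ * ∫ θ, H (θ, x) ∂μ := by
          refine integral_mono (hfint y₀) hRHSint (fun x => ?_)
          have := hpt x
          rwa [hioc x] at this
      _ = (2*π)⁻¹ * ∫ x : ℝ, ∫ θ, H (θ, x) ∂μ := integral_const_mul _ _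
      _ = (2*π)⁻¹ * ∫ θ, ∫ x, H (θ, x) ∂volume ∂μ := by rw [← hswap]
      _ = (2*π)⁻¹ * ∫ θ, (∫ x : ℝ, f (y₀ + r * Real.sin θ) x) ∂μ := by
          congr 1
          exact integral_congr_ae (Filter.Eventually.of_forall fun θ => hinner θ)
      _ = (2*π)⁻¹ * ∫ θ in (0:ℝ)..(2*π), ∫ x : ℝ, f (y₀ + r * Real.sin θ) x := by
          rw [intervalIntegral.integral_of_le h2pi.le, hμ]
  exact convexOn_of_submean _ hFcont hsubmean
end
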